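/- arXiv:1906.11986 — 6 statements merged into one kernel-verified Lean document; each statement's English description precedes it below -/
import Mathlib

section
/- Fix ε > 0 and let α := limsup_{N→∞} log(#𝔈_N)/N. Then for (Lebesgue-)almost all real numbers τ, there exists N₀ (depending on τ and ε) such that 𝔪_N(τ) > exp(−(α+ε)·N) for all integers N ≥ N₀. -/
open Finset

/-- The set of Egyptian fractions with denominators at most `N`. -/
def egyptianFractions (N : ℕ) : Finset ℚ :=
  (Finset.Icc 1 N).powerset.image (fun s : Finset ℕ => ∑ n ∈ s, (1 : ℚ) / (n : ℚ))

/-- The set `𝔖_N = { ∑_{n=1}^N s_n/n : s_n ∈ {-1,+1} }`. -/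
def signedSums (N : ℕ) : Finset ℚ :=
  (Finset.Icc 1 N).powerset.image
    (fun s : Finset ℕ => ∑ n ∈ Finset.Icc 1 N, (if n ∈ s then (1 : ℚ) else -1) / (n : ℚ))

/-- `𝔪_N(τ) = min { |τ - σ| : σ ∈ 𝔖_N }`. -/
noncomputable def mN (N : ℕ) (τ : ℝ) : ℝ :=
  sInf {x : ℝ | ∃ σ ∈ signedSums N, x = |τ - (σ : ℝ)|}

/-- `α = limsup_{N → ∞} log(#𝔈_N)/N`. -/
noncomputable def alphaEgyptian : ℝ :=
  Filter.atTop.limsup (fun N : ℕ => Real.log (egyptianFractions N).card / N)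

lemma signedSums_nonempty (N : ℕ) : (signedSums N).Nonempty :=
  Finset.image_nonempty.2 ⟨∅, Finset.empty_mem_powerset _⟩

lemma egyptianFractions_nonempty (N : ℕ) : (egyptianFractions N).Nonempty :=
  Finset.image_nonempty.2 ⟨∅, Finset.empty_mem_powerset _⟩

lemma signedSums_eq_image (N : ℕ) :
    signedSums N = (egyptianFractions N).image
      (fun q => 2 * q - ∑ n ∈ Finset.Icc 1 N, (1 : ℚ) / n) := by
  unfold signedSums egyptianFractions
  rw [Finset.image_image]
  apply Finset.image_congr
  intro s hs
  simp only [Finset.mem_coe, Finset.mem_powerset] at hs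
  simp only [Function.comp_apply]
  have h1 : ∑ n ∈ s, (1 : ℚ) / n
      = ∑ n ∈ Finset.Icc 1 N, (if n ∈ s then (1 : ℚ) / n else 0) := by
    rw [Finset.sum_ite_mem, Finset.inter_eq_right.2 hs]
  rw [h1, Finset.mul_sum, ← Finset.sum_sub_distrib]
  apply Finset.sum_congr rfl
  intro n _
  by_cases h : n ∈ s <;> simp [h] <;> ring

lemma card_signedSums_le (N : ℕ) :
    (signedSums N).card ≤ (egyptianFractions N).card := by
  rw [signedSums_eq_image]; exact Finset.card_image_le

lemma card_egyptianFractions_le (N : ℕ) : (egyptianFractions N).card ≤ 2 ^ N := by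
  calc (egyptianFractions N).card ≤ (Finset.Icc 1 N).powerset.card := Finset.card_image_le
    _ = 2 ^ N := by rw [Finset.card_powerset, Nat.card_Icc]; simp

lemma mN_attained (N : ℕ) (τ : ℝ) : ∃ σ ∈ signedSums N, mN N τ = |τ - (σ : ℝ)| := by
  have hA : {x : ℝ | ∃ σ ∈ signedSums N, x = |τ - (σ : ℝ)|}
      = (fun σ : ℚ => |τ - (σ : ℝ)|) '' (signedSums N : Set ℚ) := by
    ext x
    simp [eq_comm]
  have hfin : ({x : ℝ | ∃ σ ∈ signedSums N, x = |τ - (σ : ℝ)|}).Finite := by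
    rw [hA]; exact ((signedSums N).finite_toSet.image _)
  have hne : ({x : ℝ | ∃ σ ∈ signedSums N, x = |τ - (σ : ℝ)|}).Nonempty := by
    obtain ⟨σ, hσ⟩ := signedSums_nonempty N
    exact ⟨|τ - (σ : ℝ)|, σ, hσ, rfl⟩
  have := hne.csInf_mem hfin
  obtain ⟨σ, hσ, hx⟩ := this
  exact ⟨σ, hσ, hx⟩

theorem mN_almost_everywhere_lower_bound (ε : ℝ) (hε : 0 < ε) :
    ∀ᵐ τ : ℝ ∂MeasureTheory.volume, ∃ N₀ : ℕ, ∀ N : ℕ, N₀ ≤ N →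
      mN N τ > Real.exp (-(alphaEgyptian + ε) * N) := by
  set α := alphaEgyptian with hα
  set e : ℕ → ℝ := fun N => Real.exp (-(α + ε) * N) with he
  set s : ℕ → Set ℝ := fun N => {τ : ℝ | mN N τ ≤ e N} with hs
  -- boundedness of the sequence defining α
  have hbdd : Filter.IsBoundedUnder (· ≤ ·) Filter.atTop
      (fun N : ℕ => Real.log (egyptianFractions N).card / N) := by
    refine Filter.isBoundedUnder_of ⟨Real.log 2, fun N => ?_⟩
    rcases Nat.eq_zero_or_pos N with h0 | h0
    · simp only [h0, Nat.cast_zero, div_zero]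
      exact Real.log_nonneg one_le_two
    · rw [div_le_iff₀ (by positivity)]
      have h1 : ((egyptianFractions N).card : ℝ) ≤ (2 : ℝ) ^ N := by
        exact_mod_cast card_egyptianFractions_le N
      calc Real.log (egyptianFractions N).card ≤ Real.log ((2:ℝ) ^ N) :=
            Real.log_le_log (by exact_mod_cast (egyptianFractions_nonempty N).card_pos) h1
        _ = N * Real.log 2 := by rw [Real.log_pow]
        _ = Real.log 2 * N := by ring
  have hev : ∀ᶠ N in Filter.atTop,
      Real.log (egyptianFractions N).card / N < α + ε / 2 :=
    Filter.eventually_lt_of_limsup_lt (show α < α + ε / 2 by linarith) hbdd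
  obtain ⟨M₀, hM₀⟩ := Filter.eventually_atTop.1 hev
  set M := max M₀ 1 with hM
  -- card bound for N ≥ M
  have hcard : ∀ N, M ≤ N →
      ((egyptianFractions N).card : ℝ) ≤ Real.exp ((α + ε / 2) * N) := by
    intro N hN
    have hN1 : 1 ≤ N := le_trans (le_max_right _ _) hN
    have hNpos : (0 : ℝ) < N := by exact_mod_cast hN1
    have hlt := hM₀ N (le_trans (le_max_left _ _) hN)
    rw [div_lt_iff₀ hNpos] at hlt
    have hcpos : (0 : ℝ) < ((egyptianFractions N).card : ℝ) := by
      exact_mod_cast (egyptianFractions_nonempty N).card_pos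
    calc ((egyptianFractions N).card : ℝ)
        = Real.exp (Real.log ((egyptianFractions N).card : ℝ)) := (Real.exp_log hcpos).symm
      _ ≤ Real.exp ((α + ε / 2) * N) := Real.exp_le_exp.2 (le_of_lt hlt)
  -- measure bound
  have hmeas : ∀ N, MeasureTheory.volume (s N)
      ≤ ((signedSums N).card : ENNReal) * ENNReal.ofReal (2 * e N) := by
    intro N
    have hsub : s N ⊆ ⋃ σ ∈ signedSums N, Metric.closedBall (σ : ℝ) (e N) := by
      intro τ hτ
      obtain ⟨σ, hσ, heq⟩ := mN_attained N τ
      refine Set.mem_biUnion hσ ?_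
      rw [Metric.mem_closedBall, Real.dist_eq]
      rw [hs] at hτ
      simp only [Set.mem_setOf_eq] at hτ
      rw [heq] at hτ
      exact hτ
    calc MeasureTheory.volume (s N)
        ≤ MeasureTheory.volume (⋃ σ ∈ signedSums N, Metric.closedBall (σ : ℝ) (e N)) :=
          MeasureTheory.measure_mono hsub
      _ ≤ ∑ σ ∈ signedSums N, MeasureTheory.volume (Metric.closedBall (σ : ℝ) (e N)) :=
          MeasureTheory.measure_biUnion_finset_le _ _
      _ = ∑ _σ ∈ signedSums N, ENNReal.ofReal (2 * e N) := by
          simp [Real.volume_closedBall]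
      _ = ((signedSums N).card : ENNReal) * ENNReal.ofReal (2 * e N) := by
          rw [Finset.sum_const, nsmul_eq_mul]
  -- tail bound
  have htail : ∀ N, M ≤ N → MeasureTheory.volume (s N)
      ≤ ENNReal.ofReal (2 * Real.exp (-(ε / 2) * N)) := by
    intro N hN
    have h1 : ((signedSums N).card : ℝ) ≤ Real.exp ((α + ε / 2) * N) := by
      refine le_trans ?_ (hcard N hN)
      exact_mod_cast card_signedSums_le N
    have h2 : ((signedSums N).card : ENNReal) ≤ ENNReal.ofReal (Real.exp ((α + ε / 2) * N)) := by
      rw [← ENNReal.ofReal_natCast]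
      exact ENNReal.ofReal_le_ofReal h1
    calc MeasureTheory.volume (s N)
        ≤ ((signedSums N).card : ENNReal) * ENNReal.ofReal (2 * e N) := hmeas N
      _ ≤ ENNReal.ofReal (Real.exp ((α + ε / 2) * N)) * ENNReal.ofReal (2 * e N) :=
          mul_le_mul_left h2 _
      _ = ENNReal.ofReal (Real.exp ((α + ε / 2) * N) * (2 * e N)) :=
          (ENNReal.ofReal_mul (Real.exp_nonneg _)).symm
      _ = ENNReal.ofReal (2 * Real.exp (-(ε / 2) * N)) := by
          congr 1
          rw [he]
          simp only []
          rw [show Real.exp ((α + ε / 2) * N) * (2 * Real.exp (-(α + ε) * N))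
              = 2 * (Real.exp ((α + ε / 2) * N) * Real.exp (-(α + ε) * N)) by ring,
            ← Real.exp_add]
          congr 2
          ring
  -- Borel-Cantelli on shifted sets
  have hsummable : Summable (fun n : ℕ => 2 * Real.exp (-(ε / 2) * (n + M : ℕ))) := by
    have hr : Summable (fun n : ℕ => 2 * Real.exp (-(ε / 2) * M) * Real.exp (-(ε / 2)) ^ n) :=
      (summable_geometric_of_lt_one (Real.exp_nonneg _)
        (Real.exp_lt_one_iff.2 (by linarith))).mul_left _
    refine hr.congr fun n => ?_
    rw [← Real.exp_nat_mul, mul_assoc, ← Real.exp_add]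
    congr 1
    push_cast
    ring
  have htsum : (∑' n : ℕ, MeasureTheory.volume (s (n + M))) ≠ ⊤ := by
    have hle : (∑' n : ℕ, MeasureTheory.volume (s (n + M)))
        ≤ ∑' n : ℕ, ENNReal.ofReal (2 * Real.exp (-(ε / 2) * (n + M : ℕ))) := by
      refine ENNReal.tsum_le_tsum fun n => htail (n + M) (Nat.le_add_left _ _)
    have heq : (∑' n : ℕ, ENNReal.ofReal (2 * Real.exp (-(ε / 2) * (n + M : ℕ))))
        = ENNReal.ofReal (∑' n : ℕ, 2 * Real.exp (-(ε / 2) * (n + M : ℕ))) :=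
      (ENNReal.ofReal_tsum_of_nonneg (fun n => by positivity) hsummable).symm
    rw [heq] at hle
    exact ne_top_of_le_ne_top ENNReal.ofReal_ne_top hle
  have hae := MeasureTheory.ae_eventually_notMem htsum
  filter_upwards [hae] with τ hτ
  obtain ⟨N₁, hN₁⟩ := Filter.eventually_atTop.1 hτ
  refine ⟨N₁ + M, fun N hN => ?_⟩
  have hNM : M ≤ N := le_trans (Nat.le_add_left _ _) hN
  have h1 : N - M + M = N := Nat.sub_add_cancel hNM
  have h2 : N₁ ≤ N - M := by omega
  have := hN₁ (N - M) h2
  rw [h1] at this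
  rw [hs] at this
  simp only [Set.mem_setOf_eq, not_le] at this
  exact this
end

section
/- For each prime p let μ_p be a positive integer, and suppose μ_p = 1 for all but finitely many primes p. Let D := { n ∈ ℕ_{>0} : μ_p divides ν_p(n) for every prime p }, where ν_p(n) is the p-adic valuation of n. Then D has natural density δ := ∏_p (1 − p^{−1})/(1 − p^{−μ_p}), i.e., #(D ∩ [1,x]) / x → δ as x → +∞ (only the finitely many primes with μ_p > 1 contribute nontrivially to the product). -/
open Finset Filter

private lemma aux_div_le (k : ℕ) (hk : 0 < k) (x : ℕ) :
    ((x / k : ℕ) : ℝ) / x ≤ (k : ℝ)⁻¹ := by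
  rcases Nat.eq_zero_or_pos x with rfl | hx
  · simp
  · have h1 : ((x / k : ℕ) : ℝ) ≤ (x : ℝ) / k := Nat.cast_div_le
    have hx' : (0:ℝ) < x := by exact_mod_cast hx
    have hk' : (0:ℝ) < k := by exact_mod_cast hk
    rw [div_le_iff₀ hx']
    calc ((x / k : ℕ) : ℝ) ≤ (x:ℝ)/k := h1
    _ = (k:ℝ)⁻¹ * x := by ring
    _ = _ := by ring

private lemma aux_div_ge (k : ℕ) (hk : 0 < k) (x : ℕ) (hx : 0 < x) :
    (k : ℝ)⁻¹ - (x:ℝ)⁻¹ * k ≤ ((x / k : ℕ) : ℝ) / x := by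
  have hx' : (0:ℝ) < x := by exact_mod_cast hx
  have hk' : (0:ℝ) < k := by exact_mod_cast hk
  have h : (x:ℝ) < ((x / k : ℕ) : ℝ) * k + k := by
    have h2 : x < k * (x / k) + k := by
      conv_lhs => rw [← Nat.div_add_mod x k]
      exact Nat.add_lt_add_left (Nat.mod_lt _ hk) _
    have h2' : (x:ℝ) < k * ((x / k : ℕ) : ℝ) + k := by exact_mod_cast h2
    nlinarith
  have hk1 : (1:ℝ) ≤ k := by exact_mod_cast hk
  rw [le_div_iff₀ hx', sub_mul]
  have h3 : (x:ℝ)⁻¹ * k * x = k := by field_simp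
  have h4 : (k:ℝ)⁻¹ * x < ((x / k : ℕ) : ℝ) + 1 := by
    rw [inv_mul_lt_iff₀ hk']; nlinarith
  linarith

private lemma tendsto_natdiv_div (k : ℕ) (hk : 0 < k) :
    Filter.Tendsto (fun x : ℕ => ((x / k : ℕ) : ℝ) / x) atTop (nhds ((k:ℝ)⁻¹)) := by
  have hlow : Filter.Tendsto (fun x : ℕ => (k : ℝ)⁻¹ - (x:ℝ)⁻¹ * k) atTop (nhds ((k:ℝ)⁻¹)) := by
    have : Filter.Tendsto (fun x : ℕ => (x:ℝ)⁻¹) atTop (nhds 0) :=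
      tendsto_inv_atTop_zero.comp tendsto_natCast_atTop_atTop
    simpa using (tendsto_const_nhds (x := (k:ℝ)⁻¹)).sub (this.mul_const (k:ℝ))
  refine tendsto_of_tendsto_of_tendsto_of_le_of_le' hlow tendsto_const_nhds ?_ ?_
  · filter_upwards [eventually_ge_atTop 1] with x hx using aux_div_ge k hk x hx
  · filter_upwards with x using aux_div_le k hk x

private lemma tendsto_natdiv_atTop (k : ℕ) (hk : 0 < k) :
    Filter.Tendsto (fun x : ℕ => x / k) atTop atTop := by
  refine Filter.tendsto_atTop_atTop.mpr fun N => ⟨N * k, fun x hx => ?_⟩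
  exact (Nat.le_div_iff_mul_le hk).mpr hx

private lemma tendsto_comp_div (M : ℕ → ℕ) (hM : ∀ y, M y ≤ y) {γ : ℝ}
    (hγ : Filter.Tendsto (fun y : ℕ => (M y : ℝ) / y) atTop (nhds γ))
    (k : ℕ) (hk : 0 < k) :
    Filter.Tendsto (fun x : ℕ => (M (x / k) : ℝ) / x) atTop (nhds (γ * (k:ℝ)⁻¹)) := by
  have hM0 : M 0 = 0 := Nat.le_zero.mp (hM 0)
  have heq : ∀ x : ℕ, (M (x / k) : ℝ) / x
      = ((M (x / k) : ℝ) / ((x / k : ℕ) : ℝ)) * (((x / k : ℕ) : ℝ) / x) := by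
    intro x
    rcases Nat.eq_zero_or_pos (x / k) with h | h
    · simp [h, hM0]
    · have h' : ((x / k : ℕ ) : ℝ) ≠ 0 := by positivity
      field_simp
  simp only [heq]
  exact (hγ.comp (tendsto_natdiv_atTop k hk)).mul (tendsto_natdiv_div k hk)

private lemma keyK (M : ℕ → ℕ) (hM : ∀ y, M y ≤ y) {γ : ℝ}
    (hγ : Filter.Tendsto (fun y : ℕ => (M y : ℝ) / y) atTop (nhds γ))
    (c : ℕ) (hc : 2 ≤ c) :
    Filter.Tendsto (fun x : ℕ => (∑ b ∈ range (x + 1), (M (x / c ^ b) : ℝ)) / x)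
      atTop (nhds (γ * (1 - (c:ℝ)⁻¹)⁻¹)) := by
  have hM0 : M 0 = 0 := Nat.le_zero.mp (hM 0)
  have hc0 : 0 < c := by omega
  have hcR : (1:ℝ) < c := by exact_mod_cast hc.trans_lt' one_lt_two
  have hcinv : (c:ℝ)⁻¹ < 1 := inv_lt_one_of_one_lt₀ hcR
  have hcinv0 : (0:ℝ) ≤ (c:ℝ)⁻¹ := by positivity
  -- the summand as a function
  set f : ℕ → ℕ → ℝ := fun x b => (M (x / c ^ b) : ℝ) / x with hf
  have hzero : ∀ x b : ℕ, x < c ^ b → f x b = 0 := by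
    intro x b hlt
    simp [hf, Nat.div_eq_of_lt hlt, hM0]
  have hsum_eq : ∀ x : ℕ, (∑ b ∈ range (x + 1), (M (x / c ^ b) : ℝ)) / x = ∑' b, f x b := by
    intro x
    have h0 : ∀ b ∉ range (x + 1), f x b = 0 := by
      intro b hb
      apply hzero
      have h1 : x < 2 ^ b := by
        have := Nat.lt_two_pow_self (n := b)
        simp only [Finset.mem_range, not_lt] at hb
        omega
      exact h1.trans_le (Nat.pow_le_pow_left hc b)
    rw [tsum_eq_sum (s := range (x + 1)) h0, Finset.sum_div]
  simp only [hsum_eq]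
  have hlim : γ * (1 - (c:ℝ)⁻¹)⁻¹ = ∑' b : ℕ, γ * ((c:ℝ)⁻¹) ^ b := by
    rw [tsum_mul_left, tsum_geometric_of_lt_one hcinv0 hcinv]
  rw [hlim]
  apply tendsto_tsum_of_dominated_convergence (bound := fun b => ((c:ℝ)⁻¹) ^ b)
  · exact summable_geometric_of_lt_one hcinv0 hcinv
  · intro b
    have := tendsto_comp_div M hM hγ (c ^ b) (Nat.pow_pos (n := b) hc0)
    have hcast : ((c ^ b : ℕ) : ℝ)⁻¹ = ((c:ℝ)⁻¹) ^ b := by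
      push_cast; rw [inv_pow]
    rw [hcast] at this
    exact this
  · filter_upwards with x
    intro b
    have hnn : 0 ≤ f x b := by positivity
    rw [Real.norm_eq_abs, abs_of_nonneg hnn]
    calc f x b ≤ ((x / c ^ b : ℕ) : ℝ) / x := by
          have : (M (x / c ^ b) : ℝ) ≤ ((x / c ^ b : ℕ) : ℝ) := by exact_mod_cast hM _
          exact div_le_div_of_nonneg_right this (Nat.cast_nonneg x)
      _ ≤ ((c ^ b : ℕ) : ℝ)⁻¹ := aux_div_le _ (Nat.pow_pos (n := b) hc0) x
      _ = ((c:ℝ)⁻¹) ^ b := by push_cast; rw [inv_pow]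

private lemma fact_prime_pow_apply {q : ℕ} (hq : q.Prime) (a p : ℕ) :
    (q ^ a).factorization p = if p = q then a else 0 := by
  rw [hq.factorization_pow, Finsupp.single_apply]
  simp [eq_comm]

private lemma count_dvd (μ : ℕ → ℕ) (S : Finset ℕ) {q : ℕ} (hq : q.Prime) (hqS : q ∉ S)
    (y : ℕ) :
    ((Icc 1 y).filter (fun m => (∀ p ∈ S, μ p ∣ m.factorization p) ∧ q ∣ m)).card =
    ((Icc 1 (y / q)).filter (fun m => ∀ p ∈ S, μ p ∣ m.factorization p)).card := by
  have hq0 : 0 < q := hq.pos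
  apply Finset.card_nbij' (i := fun m => m / q) (j := fun m => q * m)
  · intro m hm
    simp only [Finset.mem_coe, Finset.mem_filter, Finset.mem_Icc] at hm ⊢
    obtain ⟨⟨h1, h2⟩, hpred, hdvd⟩ := hm
    have hm0 : m ≠ 0 := by omega
    have hqm : q ≤ m := Nat.le_of_dvd (by omega) hdvd
    refine ⟨⟨(Nat.one_le_div_iff hq0).mpr hqm, Nat.div_le_div_right h2⟩, ?_⟩
    intro p hp
    have hpq : p ≠ q := fun h => hqS (h ▸ hp)
    have : (m / q).factorization p = m.factorization p := by
      rw [Nat.factorization_div hdvd]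
      simp [hq.factorization, Finsupp.single_apply, Ne.symm hpq]
    rw [this]; exact hpred p hp
  · intro m hm
    simp only [Finset.mem_coe, Finset.mem_filter, Finset.mem_Icc] at hm ⊢
    obtain ⟨⟨h1, h2⟩, hpred⟩ := hm
    have hm0 : m ≠ 0 := by omega
    have hle : q * m ≤ y := by rw [mul_comm]; exact (Nat.le_div_iff_mul_le hq0).mp h2
    refine ⟨⟨Nat.one_le_iff_ne_zero.mpr (Nat.mul_ne_zero hq.ne_zero hm0), hle⟩, ?_, Dvd.intro m rfl⟩
    intro p hp
    have hpq : p ≠ q := fun h => hqS (h ▸ hp)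
    rw [Nat.factorization_mul hq.ne_zero hm0]
    simp only [Finsupp.coe_add, Pi.add_apply]
    rw [hq.factorization]
    simp [Finsupp.single_apply, Ne.symm hpq]
    exact hpred p hp
  · intro m hm
    simp only [Finset.mem_coe, Finset.mem_filter] at hm
    exact Nat.mul_div_cancel' hm.2.2
  · intro m hm
    exact Nat.mul_div_cancel_left m hq0

private lemma count_partition (μ : ℕ → ℕ) (S : Finset ℕ) {q : ℕ} (hq : q.Prime)
    (hqS : q ∉ S) (hμq : 0 < μ q) (x : ℕ) :
    ((Icc 1 x).filter (fun n => ∀ p ∈ insert q S, μ p ∣ n.factorization p)).card =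
    ∑ b ∈ range (x + 1), ((Icc 1 (x / (q ^ μ q) ^ b)).filter
        (fun m => (∀ p ∈ S, μ p ∣ m.factorization p) ∧ ¬ q ∣ m)).card := by
  set c := q ^ μ q with hc
  have hc0 : 0 < c := pow_pos hq.pos _
  have hcb0 : ∀ b : ℕ, 0 < c ^ b := fun b => pow_pos hc0 b
  have hcq : ∀ b : ℕ, c ^ b = q ^ (μ q * b) := fun b => by rw [hc, ← pow_mul]
  have hval : ∀ b m : ℕ, m ≠ 0 → ¬ q ∣ m → (c ^ b * m).factorization q = μ q * b := by
    intro b m hm0 hqm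
    rw [Nat.factorization_mul (hcb0 b).ne' hm0]
    simp only [Finsupp.coe_add, Pi.add_apply]
    rw [hcq b, fact_prime_pow_apply hq]
    simp [Nat.factorization_eq_zero_of_not_dvd hqm]
  have hvalp : ∀ (b m p : ℕ), m ≠ 0 → p ≠ q → (c ^ b * m).factorization p = m.factorization p := by
    intro b m p hm0 hpq
    rw [Nat.factorization_mul (hcb0 b).ne' hm0]
    simp only [Finsupp.coe_add, Pi.add_apply]
    rw [hcq b, fact_prime_pow_apply hq]
    simp [hpq]
  have hset : (Icc 1 x).filter (fun n => ∀ p ∈ insert q S, μ p ∣ n.factorization p)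
      = (range (x + 1)).biUnion (fun b => ((Icc 1 (x / c ^ b)).filter
        (fun m => (∀ p ∈ S, μ p ∣ m.factorization p) ∧ ¬ q ∣ m)).image (fun m => c ^ b * m)) := by
    ext n
    simp only [Finset.mem_filter, Finset.mem_Icc, Finset.mem_biUnion, Finset.mem_range,
      Finset.mem_image]
    constructor
    · rintro ⟨⟨h1, h2⟩, hpred⟩
      have hn0 : n ≠ 0 := by omega
      obtain ⟨b, hb⟩ := hpred q (Finset.mem_insert_self q S)
      have hord : q ^ (n.factorization q) * ordCompl[q] n = n := Nat.ordProj_mul_ordCompl_eq_self n q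
      have hcbeq : c ^ b = q ^ (n.factorization q) := by rw [hcq b, hb]
      have hprod : c ^ b * ordCompl[q] n = n := by rw [hcbeq]; exact hord
      refine ⟨b, ?_, ordCompl[q] n, ⟨⟨Nat.ordCompl_pos q hn0, ?_⟩, ?_, Nat.not_dvd_ordCompl hq hn0⟩, hprod⟩
      · have h3 : n.factorization q < n := Nat.factorization_lt q hn0
        have h4 : b ≤ μ q * b := Nat.le_mul_of_pos_left b hμq
        omega
      · rw [Nat.le_div_iff_mul_le (hcb0 b), mul_comm]
        rw [hprod]; exact h2
      · intro p hp
        have hpq : p ≠ q := fun h => hqS (h ▸ hp)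
        rw [Nat.factorization_ordCompl, Finsupp.erase_ne hpq]
        exact hpred p (Finset.mem_insert_of_mem hp)
    · rintro ⟨b, hb, m, ⟨⟨hm1, hm2⟩, hpred, hqm⟩, rfl⟩
      have hm0 : m ≠ 0 := by omega
      refine ⟨⟨Nat.one_le_iff_ne_zero.mpr (Nat.mul_ne_zero (hcb0 b).ne' hm0), ?_⟩, ?_⟩
      · rw [mul_comm]; exact (Nat.le_div_iff_mul_le (hcb0 b)).mp hm2
      · intro p hp
        rcases Finset.mem_insert.mp hp with rfl | hp'
        · rw [hval b m hm0 hqm]; exact Dvd.intro b rfl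
        · have hpq : p ≠ q := fun h => hqS (h ▸ hp')
          rw [hvalp b m p hm0 hpq]; exact hpred p hp'
  rw [hset, Finset.card_biUnion]
  · refine Finset.sum_congr rfl fun b _ => ?_
    exact Finset.card_image_of_injective _ (mul_right_injective₀ (hcb0 b).ne')
  · intro b hb b' hb' hne
    rw [Function.onFun, Finset.disjoint_left]
    intro n hn hn'
    simp only [Finset.mem_image, Finset.mem_filter, Finset.mem_Icc] at hn hn'
    obtain ⟨m, ⟨⟨hm1, _⟩, _, hqm⟩, rfl⟩ := hn
    obtain ⟨m', ⟨⟨hm1', _⟩, _, hqm'⟩, heq⟩ := hn'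
    have h1 := hval b m (by omega) hqm
    have h2 := hval b' m' (by omega) hqm'
    rw [heq] at h2
    rw [h1] at h2
    exact hne (Nat.eq_of_mul_eq_mul_left hμq h2)

private lemma count_split (μ : ℕ → ℕ) (S : Finset ℕ) {q : ℕ} (hq : q.Prime) (hqS : q ∉ S)
    (y : ℕ) :
    ((Icc 1 y).filter (fun m => (∀ p ∈ S, μ p ∣ m.factorization p) ∧ ¬ q ∣ m)).card
      + ((Icc 1 (y / q)).filter (fun m => ∀ p ∈ S, μ p ∣ m.factorization p)).card
    = ((Icc 1 y).filter (fun m => ∀ p ∈ S, μ p ∣ m.factorization p)).card := by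
  rw [← count_dvd μ S hq hqS y, ← Finset.filter_filter
      (fun m => ∀ p ∈ S, μ p ∣ m.factorization p) (fun m => ¬ q ∣ m),
    ← Finset.filter_filter (fun m => ∀ p ∈ S, μ p ∣ m.factorization p) (fun m => q ∣ m),
    add_comm]
  exact Finset.card_filter_add_card_filter_not _

private lemma key_lemma (μ : ℕ → ℕ) (S : Finset ℕ) :
    (∀ p ∈ S, p.Prime) → (∀ p ∈ S, 0 < μ p) →
    Filter.Tendsto (fun x : ℕ =>
        (((Icc 1 x).filter (fun n => ∀ p ∈ S, μ p ∣ n.factorization p)).card : ℝ) / x)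
      Filter.atTop
      (nhds (∏ p ∈ S, (1 - (p : ℝ)⁻¹) / (1 - (p : ℝ) ^ (-(μ p : ℤ))))) := by
  induction S using Finset.induction_on with
  | empty =>
    intro _ _
    rw [Finset.prod_empty]
    apply Filter.Tendsto.congr' ?_ tendsto_const_nhds
    filter_upwards [Filter.eventually_ge_atTop 1] with x hx
    have hx0 : (x:ℝ) ≠ 0 := by positivity
    rw [Finset.filter_true_of_mem (by simp), Nat.card_Icc]
    simp [hx0]
  | @insert q S hqS ih =>
    intro hS hμ
    have hq : q.Prime := hS q (Finset.mem_insert_self q S)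
    have hμq : 0 < μ q := hμ q (Finset.mem_insert_self q S)
    set δ := ∏ p ∈ S, (1 - (p : ℝ)⁻¹) / (1 - (p : ℝ) ^ (-(μ p : ℤ))) with hδ
    have hIH : Filter.Tendsto (fun y : ℕ =>
        (((Icc 1 y).filter (fun n => ∀ p ∈ S, μ p ∣ n.factorization p)).card : ℝ) / y)
        Filter.atTop (nhds δ) :=
      ih (fun p hp => hS p (Finset.mem_insert_of_mem hp))
        (fun p hp => hμ p (Finset.mem_insert_of_mem hp))
    set N : ℕ → ℕ := fun y =>
      ((Icc 1 y).filter (fun n => ∀ p ∈ S, μ p ∣ n.factorization p)).card with hNdef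
    set M : ℕ → ℕ := fun y =>
      ((Icc 1 y).filter (fun m => (∀ p ∈ S, μ p ∣ m.factorization p) ∧ ¬ q ∣ m)).card with hMdef
    have hN_le : ∀ y, N y ≤ y := fun y =>
      (Finset.card_filter_le _ _).trans (by simp [Nat.card_Icc])
    have hM_le : ∀ y, M y ≤ y := fun y =>
      (Finset.card_filter_le _ _).trans (by simp [Nat.card_Icc])
    have hNdiv : Filter.Tendsto (fun y : ℕ => (N (y / q) : ℝ) / y) Filter.atTop
        (nhds (δ * (q:ℝ)⁻¹)) := tendsto_comp_div N hN_le hIH q hq.pos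
    have hMtend : Filter.Tendsto (fun y : ℕ => (M y : ℝ) / y) Filter.atTop
        (nhds (δ * (1 - (q:ℝ)⁻¹))) := by
      have heq : ∀ y : ℕ, (M y : ℝ) / y = (N y : ℝ) / y - (N (y / q) : ℝ) / y := by
        intro y
        have h := count_split μ S hq hqS y
        have h' : (M y : ℝ) = (N y : ℝ) - (N (y / q) : ℝ) := by
          rw [hMdef, hNdef]; push_cast [← h]; ring
        rw [h', sub_div]
      simp only [heq]
      have := hIH.sub hNdiv
      convert this using 2
      ring
    have hc2 : 2 ≤ q ^ μ q := hq.two_le.trans (Nat.le_self_pow hμq.ne' q)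
    have hmain := keyK M hM_le hMtend (q ^ μ q) hc2
    have hcount : ∀ x : ℕ,
        ((((Icc 1 x).filter (fun n => ∀ p ∈ insert q S, μ p ∣ n.factorization p)).card : ℝ) / x)
        = (∑ b ∈ range (x + 1), (M (x / (q ^ μ q) ^ b) : ℝ)) / x := by
      intro x
      rw [count_partition μ S hq hqS hμq x]
      push_cast
      rfl
    simp only [hcount]
    have hconst : (∏ p ∈ insert q S, (1 - (p : ℝ)⁻¹) / (1 - (p : ℝ) ^ (-(μ p : ℤ))))
        = δ * (1 - (q:ℝ)⁻¹) * (1 - ((q ^ μ q : ℕ) : ℝ)⁻¹)⁻¹ := by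
      rw [Finset.prod_insert hqS, ← hδ]
      have : ((q ^ μ q : ℕ) : ℝ)⁻¹ = (q : ℝ) ^ (-(μ q : ℤ)) := by
        push_cast
        rw [zpow_neg, zpow_natCast]
      rw [this]
      ring
    rw [hconst]
    exact hmain

theorem density_of_valuation_condition
    (μ : ℕ → ℕ) (hμpos : ∀ p : ℕ, p.Prime → 0 < μ p)
    (hμfin : {p : ℕ | p.Prime ∧ μ p ≠ 1}.Finite) :
    Filter.Tendsto
      (fun x : ℕ =>
        (({n : ℕ | 0 < n ∧ ∀ p : ℕ, p.Prime → μ p ∣ n.factorization p} ∩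
            Set.Icc 1 x).ncard : ℝ) / x)
      Filter.atTop
      (nhds (∏ᶠ p ∈ {p : ℕ | p.Prime},
        (1 - (p : ℝ)⁻¹) / (1 - (p : ℝ) ^ (-(μ p : ℤ))))) := by
  set f : ℕ → ℝ := fun p => (1 - (p : ℝ)⁻¹) / (1 - (p : ℝ) ^ (-(μ p : ℤ))) with hf
  set S : Finset ℕ := hμfin.toFinset with hSdef
  have hS : ∀ p ∈ S, p.Prime := fun p hp => (hμfin.mem_toFinset.mp hp).1
  have hμS : ∀ p ∈ S, 0 < μ p := fun p hp => hμpos p (hS p hp)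
  have hone : ∀ p : ℕ, p.Prime → μ p = 1 → f p = 1 := by
    intro p hp h1
    have hp1 : (1:ℝ) < p := by exact_mod_cast hp.one_lt
    have : (p:ℝ) ^ (-(μ p : ℤ)) = (p:ℝ)⁻¹ := by
      rw [h1]; norm_num
    rw [hf]
    simp only [this]
    apply div_self
    have : (p:ℝ)⁻¹ < 1 := inv_lt_one_of_one_lt₀ hp1
    intro h; rw [sub_eq_zero] at h; exact this.ne' h
  -- identify the sets
  have hsets : ∀ x : ℕ,
      ({n : ℕ | 0 < n ∧ ∀ p : ℕ, p.Prime → μ p ∣ n.factorization p} ∩ Set.Icc 1 x)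
      = ↑((Icc 1 x).filter (fun n => ∀ p ∈ S, μ p ∣ n.factorization p)) := by
    intro x
    ext n
    simp only [Finset.coe_filter, Set.mem_inter_iff, Set.mem_setOf_eq, Set.mem_Icc,
      Finset.mem_Icc]
    constructor
    · rintro ⟨⟨hn, hall⟩, h1, h2⟩
      exact ⟨⟨h1, h2⟩, fun p hp => hall p (hS p hp)⟩
    · rintro ⟨⟨h1, h2⟩, hall⟩
      refine ⟨⟨h1, fun p hp => ?_⟩, h1, h2⟩
      by_cases hpS : p ∈ S
      · exact hall p hpS
      · have : μ p = 1 := by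
          by_contra hne
          exact hpS (hμfin.mem_toFinset.mpr ⟨hp, hne⟩)
        simp [this]
  -- identify the constants
  have hconst : (∏ᶠ p ∈ {p : ℕ | p.Prime}, f p) = ∏ p ∈ S, f p := by
    have hfin : ({p : ℕ | p.Prime} ∩ Function.mulSupport f).Finite := by
      apply hμfin.subset
      rintro p ⟨hp, hsupp⟩
      refine ⟨hp, fun h1 => hsupp (hone p hp h1)⟩
    rw [finprod_mem_eq_prod f hfin]
    apply Finset.prod_subset
    · intro p hp
      rw [Set.Finite.mem_toFinset] at hp
      obtain ⟨hp1, hp2⟩ := hp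
      refine hμfin.mem_toFinset.mpr ⟨hp1, fun h1 => hp2 (hone p hp1 h1)⟩
    · intro p hpS hp
      rw [Set.Finite.mem_toFinset] at hp
      by_contra hne
      exact hp ⟨hS p hpS, hne⟩
  rw [hconst]
  have := key_lemma μ S hS hμS
  refine this.congr fun x => ?_
  rw [hsets x, Set.ncard_coe_finset]
end

section
/- Let 𝔞 be a finite nonempty set of positive integers, for each prime p set μ_p := 1 + max{ ν_p(a) : a ∈ 𝔞 }, and let D := { n ∈ ℕ_{>0} : μ_p divides ν_p(n) for every prime p }. Then for any two distinct elements k₁, k₂ ∈ D, the sets k₁·𝔞 := {k₁ a : a ∈ 𝔞} and k₂·𝔞 := {k₂ a : a ∈ 𝔞} are disjoint. -/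
open Finset

theorem dilations_disjoint
    (𝔞 : Finset ℕ) (h𝔞 : 𝔞.Nonempty) (hpos : ∀ a ∈ 𝔞, 0 < a)
    (D : Set ℕ)
    (hD : D = {n : ℕ | 0 < n ∧ ∀ p : ℕ, p.Prime →
      (1 + 𝔞.sup (fun a => a.factorization p)) ∣ n.factorization p})
    (k₁ k₂ : ℕ) (hk₁ : k₁ ∈ D) (hk₂ : k₂ ∈ D) (hne : k₁ ≠ k₂) :
    Disjoint (𝔞.image (fun a => k₁ * a)) (𝔞.image (fun a => k₂ * a)) := by
  subst hD
  obtain ⟨hk₁pos, hk₁div⟩ := hk₁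
  obtain ⟨hk₂pos, hk₂div⟩ := hk₂
  rw [Finset.disjoint_left]
  rintro x hx₁ hx₂
  simp only [Finset.mem_image] at hx₁ hx₂
  obtain ⟨a₁, ha₁, rfl⟩ := hx₁
  obtain ⟨a₂, ha₂, heq⟩ := hx₂
  apply hne
  apply Nat.eq_of_factorization_eq hk₁pos.ne' hk₂pos.ne'
  intro p
  by_cases hp : p.Prime
  · have ha₁pos := hpos a₁ ha₁
    have ha₂pos := hpos a₂ ha₂
    have hfac : k₁.factorization p + a₁.factorization p
        = k₂.factorization p + a₂.factorization p := by
      have := congrArg (fun n : ℕ => n.factorization p) heq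
      simpa [Nat.factorization_mul hk₁pos.ne' ha₁pos.ne',
        Nat.factorization_mul hk₂pos.ne' ha₂pos.ne'] using this.symm
    set μ := 1 + 𝔞.sup (fun a => a.factorization p) with hμ
    have hlt₁ : a₁.factorization p < μ := by
      have := Finset.le_sup (f := fun a => a.factorization p) ha₁; omega
    have hlt₂ : a₂.factorization p < μ := by
      have := Finset.le_sup (f := fun a => a.factorization p) ha₂; omega
    obtain ⟨c₁, hc₁⟩ := hk₁div p hp
    obtain ⟨c₂, hc₂⟩ := hk₂div p hp
    have hmod : a₁.factorization p = a₂.factorization p := by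
      have h1 : (μ * c₁ + a₁.factorization p) % μ = a₁.factorization p :=
        by rw [Nat.mul_add_mod, Nat.mod_eq_of_lt hlt₁]
      have h2 : (μ * c₂ + a₂.factorization p) % μ = a₂.factorization p :=
        by rw [Nat.mul_add_mod, Nat.mod_eq_of_lt hlt₂]
      rw [← h1, ← h2, ← hc₁, ← hc₂, hfac]
    omega
  · simp [Nat.factorization_eq_zero_of_not_prime _ hp]
end

section
/- Let 𝔞_1 ⊂ 𝔞_2 ⊂ ⋯ ⊂ 𝔞_ℓ =: 𝔞 be finite nonempty sets of positive integers, let M := lcm{ a : a ∈ 𝔞 }, δ := (∑_{d | M} 1/d)^{−1}, and for i = 1,…,ℓ let r_i := #R_i where R_i := { ∑_{a ∈ 𝔞_i} t_a/a : t_a ∈ {0,1} }. With the convention 1/max(𝔞_{ℓ+1}) := 0, one has limsup_{N→∞} log(#𝔈_N)/N ≤ log 2 − δ · ∑_{i=1}^{ℓ} (1/max(𝔞_i) − 1/max(𝔞_{i+1})) · log( 2^{#𝔞_i} / r_i ). -/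
open Finset

namespace ChainsUB

/-- The set of subset sums of reciprocals of a finite set of naturals. -/
def egy (S : Finset ℕ) : Finset ℚ :=
  S.powerset.image (fun s : Finset ℕ => ∑ n ∈ s, (1 : ℚ) / (n : ℚ))

lemma one_le_egy_card (S : Finset ℕ) : 1 ≤ (egy S).card :=
  Finset.card_pos.2 ⟨0, Finset.mem_image.2 ⟨∅, Finset.mem_powerset.2 (Finset.empty_subset _),
    by simp⟩⟩

lemma egy_card_le_two_pow (S : Finset ℕ) : (egy S).card ≤ 2 ^ S.card :=
  le_trans Finset.card_image_le (le_of_eq (Finset.card_powerset S))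

lemma egy_card_union_le (S T : Finset ℕ) :
    (egy (S ∪ T)).card ≤ (egy S).card * (egy T).card := by
  have hsub : egy (S ∪ T) ⊆ Finset.image₂ (· + ·) (egy S) (egy T) := by
    intro q hq
    obtain ⟨t, ht, rfl⟩ := Finset.mem_image.1 hq
    rw [Finset.mem_powerset] at ht
    rw [← Finset.sum_inter_add_sum_sdiff t S]
    apply Finset.mem_image₂_of_mem
    · exact Finset.mem_image.2 ⟨t ∩ S, Finset.mem_powerset.2 Finset.inter_subset_right, rfl⟩
    · refine Finset.mem_image.2 ⟨t \ S, Finset.mem_powerset.2 ?_, rfl⟩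
      intro x hx
      rcases Finset.mem_sdiff.1 hx with ⟨h1, h2⟩
      rcases Finset.mem_union.1 (ht h1) with h | h
      · exact absurd h h2
      · exact h
  exact le_trans (Finset.card_le_card hsub) (Finset.card_image₂_le _ _ _)

lemma egy_card_family {ι : Type} [DecidableEq ι] (I : Finset ι) :
    ∀ (U : Finset ℕ) (B : ι → Finset ℕ), (∀ j ∈ I, B j ⊆ U) →
    (∀ j ∈ I, ∀ j' ∈ I, j ≠ j' → Disjoint (B j) (B j')) →
    (∑ j ∈ I, (B j).card ≤ U.card ∧
      (egy U).card ≤ (∏ j ∈ I, (egy (B j)).card) * 2 ^ (U.card - ∑ j ∈ I, (B j).card)) := by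
  induction I using Finset.cons_induction with
  | empty =>
      intro U B _ _
      simpa using egy_card_le_two_pow U
  | cons j s hj ih =>
      intro U B hsub hdisj
      have hjI : j ∈ Finset.cons j s hj := Finset.mem_cons_self j s
      have hBU : B j ⊆ U := hsub j hjI
      have hsub' : ∀ j' ∈ s, B j' ⊆ U \ B j := by
        intro j' hj' x hx
        have hne : j ≠ j' := by rintro rfl; exact hj hj'
        have hd := hdisj j hjI j' (Finset.mem_cons.2 (Or.inr hj')) hne
        exact Finset.mem_sdiff.2 ⟨hsub j' (Finset.mem_cons.2 (Or.inr hj')) hx,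
          fun hxB => (Finset.disjoint_right.1 hd hx) hxB⟩
      have hdisj' : ∀ a ∈ s, ∀ b ∈ s, a ≠ b → Disjoint (B a) (B b) := by
        intro a ha b hb hab
        exact hdisj a (Finset.mem_cons.2 (Or.inr ha)) b (Finset.mem_cons.2 (Or.inr hb)) hab
      obtain ⟨hsum, hcard⟩ := ih (U \ B j) B hsub' hdisj'
      have hUsplit : B j ∪ (U \ B j) = U := Finset.union_sdiff_of_subset hBU
      have hc : (U \ B j).card = U.card - (B j).card := Finset.card_sdiff_of_subset hBU
      have hBle : (B j).card ≤ U.card := Finset.card_le_card hBU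
      constructor
      · rw [Finset.sum_cons]
        omega
      · have h1 : (egy U).card ≤ (egy (B j)).card * (egy (U \ B j)).card := by
          conv_lhs => rw [← hUsplit]
          exact egy_card_union_le _ _
        rw [Finset.prod_cons, Finset.sum_cons]
        calc (egy U).card ≤ (egy (B j)).card * (egy (U \ B j)).card := h1
          _ ≤ (egy (B j)).card *
              ((∏ j' ∈ s, (egy (B j')).card) * 2 ^ ((U \ B j).card - ∑ j' ∈ s, (B j').card)) :=
            Nat.mul_le_mul_left _ hcard
          _ = ((egy (B j)).card * ∏ j' ∈ s, (egy (B j')).card) *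
              2 ^ (U.card - ((B j).card + ∑ j' ∈ s, (B j').card)) := by
            rw [hc, Nat.sub_sub, mul_assoc]

lemma egy_card_image_le (A : Finset ℕ) (n : ℕ) (hn : n ≠ 0) :
    (egy (A.image fun a => n * a)).card ≤ (egy A).card := by
  classical
  have hinj : Function.Injective (fun a : ℕ => n * a) := fun a b h =>
    Nat.eq_of_mul_eq_mul_left (Nat.pos_of_ne_zero hn) h
  have hsub : egy (A.image fun a => n * a) ⊆ (egy A).image fun q => q / (n : ℚ) := by
    intro q hq
    obtain ⟨t, ht, rfl⟩ := Finset.mem_image.1 hq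
    rw [Finset.mem_powerset] at ht
    set s := A.filter (fun a => n * a ∈ t) with hs
    have hts : t = s.image fun a => n * a := by
      ext x
      constructor
      · intro hx
        obtain ⟨a, ha, rfl⟩ := Finset.mem_image.1 (ht hx)
        exact Finset.mem_image.2 ⟨a, Finset.mem_filter.2 ⟨ha, hx⟩, rfl⟩
      · intro hx
        obtain ⟨a, ha, rfl⟩ := Finset.mem_image.1 hx
        exact (Finset.mem_filter.1 ha).2
    refine Finset.mem_image.2 ⟨∑ a ∈ s, (1 : ℚ) / a,
      Finset.mem_image.2 ⟨s, Finset.mem_powerset.2 (Finset.filter_subset _ _), rfl⟩, ?_⟩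
    rw [hts, Finset.sum_image (fun a _ b _ h => hinj h), Finset.sum_div]
    refine Finset.sum_congr rfl fun a _ => ?_
    push_cast
    rw [div_div, mul_comm (a : ℚ) (n : ℚ)]
  exact le_trans (Finset.card_le_card hsub) Finset.card_image_le



def WP (M v : ℕ) : Prop :=
  ∀ p ∈ v.primeFactors, p ∣ M ∧ (M.factorization p + 1) ∣ v.factorization p

instance (M : ℕ) : DecidablePred (WP M) := fun _ => Finset.decidableDforallFinset

lemma WP_one (M : ℕ) : WP M 1 := by intro p hp; simp at hp

lemma decomp (M : ℕ) (hM : M ≠ 0) :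
    ∀ n : ℕ, n ≠ 0 → ∃ d v m : ℕ, d ∣ M ∧ WP M v ∧ Nat.Coprime M m ∧ n = d * v * m := by
  intro n
  induction n using Nat.recOnPosPrimePosCoprime with
  | prime_pow p k hpp hk =>
      intro _
      by_cases hpM : p ∣ M
      · refine ⟨p ^ (k % (M.factorization p + 1)), p ^ (k - k % (M.factorization p + 1)), 1,
          ?_, ?_, Nat.coprime_one_right _, ?_⟩
        · refine dvd_trans (pow_dvd_pow p ?_) (Nat.ordProj_dvd M p)
          have := Nat.mod_lt k (show 0 < M.factorization p + 1 by omega)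
          omega
        · intro q hq
          rw [Nat.mem_primeFactors] at hq
          obtain ⟨hq1, hq2, _⟩ := hq
          have hqp : q = p := (Nat.prime_dvd_prime_iff_eq hq1 hpp).1 (hq1.dvd_of_dvd_pow hq2)
          rw [hqp]
          refine ⟨hpM, ?_⟩
          rw [hpp.factorization_pow, Finsupp.single_eq_same]
          have hmod := Nat.div_add_mod k (M.factorization p + 1)
          exact ⟨k / (M.factorization p + 1), by omega⟩
        · rw [mul_one, ← pow_add]
          congr 1
          have := Nat.mod_le k (M.factorization p + 1)
          omega
      · refine ⟨1, 1, p ^ k, one_dvd _, WP_one M, ?_, by ring⟩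
        exact (((Nat.Prime.coprime_iff_not_dvd hpp).2 hpM).pow_left k).symm
  | zero => intro h; exact absurd rfl h
  | one => intro _; exact ⟨1, 1, 1, one_dvd _, WP_one M, Nat.coprime_one_right _, by ring⟩
  | coprime a b ha hb hab iha ihb =>
      intro _
      have ha0 : a ≠ 0 := by omega
      have hb0 : b ≠ 0 := by omega
      obtain ⟨d1, v1, m1, hd1, hv1, hm1, he1⟩ := iha ha0
      obtain ⟨d2, v2, m2, hd2, hv2, hm2, he2⟩ := ihb hb0
      have hv10 : v1 ≠ 0 := by rintro rfl; simp at he1; omega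
      have hv20 : v2 ≠ 0 := by rintro rfl; simp at he2; omega
      have hd1a : d1 ∣ a := ⟨v1 * m1, by rw [he1]; ring⟩
      have hd2b : d2 ∣ b := ⟨v2 * m2, by rw [he2]; ring⟩
      have hv1a : v1 ∣ a := ⟨d1 * m1, by rw [he1]; ring⟩
      have hv2b : v2 ∣ b := ⟨d2 * m2, by rw [he2]; ring⟩
      refine ⟨d1 * d2, v1 * v2, m1 * m2, ?_, ?_, hm1.mul_right hm2, by rw [he1, he2]; ring⟩
      · exact (Nat.Coprime.coprime_dvd_left hd1a
          (Nat.Coprime.coprime_dvd_right hd2b hab)).mul_dvd_of_dvd_of_dvd hd1 hd2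
      · intro q hq
        rw [Nat.mem_primeFactors] at hq
        obtain ⟨hq1, hq2, _⟩ := hq
        have hfact : (v1 * v2).factorization q = v1.factorization q + v2.factorization q := by
          rw [Nat.factorization_mul hv10 hv20, Finsupp.add_apply]
        rcases (Nat.Prime.dvd_mul hq1).1 hq2 with hqv | hqv
        · obtain ⟨hqM, hdvd⟩ := hv1 q (Nat.mem_primeFactors.2 ⟨hq1, hqv, hv10⟩)
          have hnd : ¬ q ∣ v2 := by
            intro hq2'
            have : q ∣ Nat.gcd a b := Nat.dvd_gcd (hqv.trans hv1a) (hq2'.trans hv2b)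
            rw [hab] at this
            exact hq1.one_lt.ne' (Nat.dvd_one.1 this)
          refine ⟨hqM, ?_⟩
          rw [hfact, Nat.factorization_eq_zero_of_not_dvd hnd]
          simpa using hdvd
        · obtain ⟨hqM, hdvd⟩ := hv2 q (Nat.mem_primeFactors.2 ⟨hq1, hqv, hv20⟩)
          have hnd : ¬ q ∣ v1 := by
            intro hq1'
            have : q ∣ Nat.gcd a b := Nat.dvd_gcd (hq1'.trans hv1a) (hqv.trans hv2b)
            rw [hab] at this
            exact hq1.one_lt.ne' (Nat.dvd_one.1 this)
          refine ⟨hqM, ?_⟩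
          rw [hfact, Nat.factorization_eq_zero_of_not_dvd hnd]
          simpa using hdvd

private lemma mul_add_inj {k s1 s2 x y : ℕ} (h : (k+1) * s1 + x = (k+1) * s2 + y)
    (hx : x ≤ k) (hy : y ≤ k) : s1 = s2 := by
  have h1 : ((k+1) * s1 + x) / (k+1) = s1 := by
    rw [Nat.mul_add_div (by omega)]
    simp [Nat.div_eq_of_lt (show x < k + 1 by omega)]
  have h2 : ((k+1) * s2 + y) / (k+1) = s2 := by
    rw [Nat.mul_add_div (by omega)]
    simp [Nat.div_eq_of_lt (show y < k + 1 by omega)]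
  rw [← h1, h, h2]

lemma key_inj (M : ℕ) (hM : M ≠ 0) {v m a v' m' a' : ℕ}
    (hv0 : v ≠ 0) (hm0 : m ≠ 0) (hv'0 : v' ≠ 0) (hm'0 : m' ≠ 0)
    (hv : WP M v) (hv' : WP M v') (hm : Nat.Coprime M m) (hm' : Nat.Coprime M m')
    (ha : a ∣ M) (ha' : a' ∣ M) (heq : v * m * a = v' * m' * a') : v = v' ∧ m = m' := by
  have ha0 : a ≠ 0 := by rintro rfl; exact hM (Nat.eq_zero_of_zero_dvd (by simpa using ha))
  have ha'0 : a' ≠ 0 := by rintro rfl; exact hM (Nat.eq_zero_of_zero_dvd (by simpa using ha'))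
  have key : ∀ p : ℕ, p.Prime →
      v.factorization p = v'.factorization p ∧ m.factorization p = m'.factorization p := by
    intro p pp
    have hfe : v.factorization p + m.factorization p + a.factorization p
        = v'.factorization p + m'.factorization p + a'.factorization p := by
      have h1 := congrArg Nat.factorization heq
      rw [Nat.factorization_mul (mul_ne_zero hv0 hm0) ha0, Nat.factorization_mul hv0 hm0,
        Nat.factorization_mul (mul_ne_zero hv'0 hm'0) ha'0, Nat.factorization_mul hv'0 hm'0]
        at h1
      have := DFunLike.congr_fun h1 p
      simpa using this
    have hvfac : ∀ (w : ℕ), w ≠ 0 → WP M w → (M.factorization p + 1) ∣ w.factorization p := by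
      intro w hw0 hw
      by_cases hpw : p ∣ w
      · exact (hw p (Nat.mem_primeFactors.2 ⟨pp, hpw, hw0⟩)).2
      · rw [Nat.factorization_eq_zero_of_not_dvd hpw]
        exact dvd_zero _
    by_cases hpM : p ∣ M
    · have hmp : m.factorization p = 0 :=
        Nat.factorization_eq_zero_of_not_dvd
          ((Nat.Prime.coprime_iff_not_dvd pp).1 (Nat.Coprime.coprime_dvd_left hpM hm))
      have hmp' : m'.factorization p = 0 :=
        Nat.factorization_eq_zero_of_not_dvd
          ((Nat.Prime.coprime_iff_not_dvd pp).1 (Nat.Coprime.coprime_dvd_left hpM hm'))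
      have hap : a.factorization p ≤ M.factorization p :=
        (Nat.factorization_le_iff_dvd ha0 hM).2 ha p
      have hap' : a'.factorization p ≤ M.factorization p :=
        (Nat.factorization_le_iff_dvd ha'0 hM).2 ha' p
      obtain ⟨s1, hs1⟩ := hvfac v hv0 hv
      obtain ⟨s2, hs2⟩ := hvfac v' hv'0 hv'
      have hs : s1 = s2 := by
        apply mul_add_inj (k := M.factorization p) (x := a.factorization p)
          (y := a'.factorization p) _ hap hap'
        rw [← hs1, ← hs2]
        omega
      refine ⟨by rw [hs1, hs2, hs], by rw [hmp, hmp']⟩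
    · have hvp : v.factorization p = 0 := by
        by_cases hpv : p ∣ v
        · exact absurd (hv p (Nat.mem_primeFactors.2 ⟨pp, hpv, hv0⟩)).1 hpM
        · exact Nat.factorization_eq_zero_of_not_dvd hpv
      have hvp' : v'.factorization p = 0 := by
        by_cases hpv : p ∣ v'
        · exact absurd (hv' p (Nat.mem_primeFactors.2 ⟨pp, hpv, hv'0⟩)).1 hpM
        · exact Nat.factorization_eq_zero_of_not_dvd hpv
      have hapz : a.factorization p = 0 :=
        Nat.factorization_eq_zero_of_not_dvd (fun h => hpM (h.trans ha))
      have hapz' : a'.factorization p = 0 :=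
        Nat.factorization_eq_zero_of_not_dvd (fun h => hpM (h.trans ha'))
      omega
  constructor
  · refine Nat.factorization_inj (by simpa using hv0) (by simpa using hv'0) (Finsupp.ext fun p => ?_)
    by_cases pp : p.Prime
    · exact (key p pp).1
    · rw [Nat.factorization_eq_zero_of_not_prime _ pp, Nat.factorization_eq_zero_of_not_prime _ pp]
  · refine Nat.factorization_inj (by simpa using hm0) (by simpa using hm'0) (Finsupp.ext fun p => ?_)
    by_cases pp : p.Prime
    · exact (key p pp).2
    · rw [Nat.factorization_eq_zero_of_not_prime _ pp, Nat.factorization_eq_zero_of_not_prime _ pp]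



lemma coprime_count (M : ℕ) (u : ℕ) :
    ∀ q : ℕ, q * M.totient ≤ #{x ∈ Finset.Ico u (u + q * M) | M.Coprime x} := by
  intro q
  induction q with
  | zero => simp
  | succ q ih =>
      have hsplit : Finset.Ico u (u + (q+1) * M)
          = Finset.Ico u (u + q * M) ∪ Finset.Ico (u + q * M) (u + q * M + M) := by
        rw [Finset.Ico_union_Ico_eq_Ico (by omega) (by omega)]
        congr 1
        ring
      rw [hsplit, Finset.filter_union,
        Finset.card_union_of_disjoint
          (Finset.disjoint_filter_filter (Finset.Ico_disjoint_Ico_consecutive _ _ _))]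
      have htot := Nat.filter_coprime_Ico_eq_totient M (u + q * M)
      have hexp : (q + 1) * M.totient = q * M.totient + M.totient := by ring
      omega

lemma lognat_mono {a b : ℕ} (h : a ≤ b) : Real.log a ≤ Real.log b := by
  rcases Nat.eq_zero_or_pos a with rfl | ha
  · simp only [Nat.cast_zero, Real.log_zero]
    rcases Nat.eq_zero_or_pos b with rfl | hb
    · simp
    · exact Real.log_nonneg (by exact_mod_cast hb)
  · exact Real.log_le_log (by exact_mod_cast ha) (by exact_mod_cast h)

lemma coprime_harmonic (M : ℕ) (hM : M ≠ 0) :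
    ∀ q : ℕ, ∑ m ∈ {x ∈ Finset.Ico 1 (1 + q * M) | M.Coprime x}, (1 : ℝ) / m
      ≤ (M.totient : ℝ) * (1 + (1 / M) * ∑ j ∈ Finset.Ico 1 q, (1 : ℝ) / j) := by
  have hM0 : (0 : ℝ) < M := by exact_mod_cast Nat.pos_of_ne_zero hM
  intro q
  induction q with
  | zero =>
      have h1 : Finset.Ico 1 (1 + 0 * M) = ∅ := by simp
      rw [h1]
      simp only [Finset.filter_empty, Finset.sum_empty]
      positivity
  | succ q ih =>
      have hsplit : Finset.Ico 1 (1 + (q+1) * M)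
          = Finset.Ico 1 (1 + q * M) ∪ Finset.Ico (1 + q * M) (1 + q * M + M) := by
        rw [Finset.Ico_union_Ico_eq_Ico (by omega) (by omega)]
        congr 1
        ring
      rw [hsplit, Finset.filter_union,
        Finset.sum_union (Finset.disjoint_filter_filter (Finset.Ico_disjoint_Ico_consecutive _ _ _))]
      have hcard : #{x ∈ Finset.Ico (1 + q * M) (1 + q * M + M) | M.Coprime x} = M.totient :=
        Nat.filter_coprime_Ico_eq_totient M (1 + q * M)
      set bnd : ℝ := if q = 0 then 1 else 1 / ((q : ℝ) * M) with hbnd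
      have hblock : ∑ m ∈ {x ∈ Finset.Ico (1 + q * M) (1 + q * M + M) | M.Coprime x},
          (1 : ℝ) / m ≤ (M.totient : ℝ) * bnd := by
        have hb : ∀ x ∈ {x ∈ Finset.Ico (1 + q * M) (1 + q * M + M) | M.Coprime x},
            (1 : ℝ) / x ≤ bnd := by
          intro x hx
          rw [Finset.mem_filter, Finset.mem_Ico] at hx
          have hx1 : 1 + q * M ≤ x := hx.1.1
          have hxR : ((1 + q * M : ℕ) : ℝ) ≤ (x : ℝ) := Nat.cast_le.2 hx1
          push_cast at hxR
          rw [hbnd]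
          split_ifs with hq0
          · have hx0 : (1 : ℝ) ≤ (x : ℝ) := by exact_mod_cast (by omega : 1 ≤ x)
            rw [div_le_one (by linarith)]
            linarith
          · have hq1 : 1 ≤ q := Nat.one_le_iff_ne_zero.2 hq0
            have hq1R : (1 : ℝ) ≤ (q : ℝ) := by exact_mod_cast hq1
            have hqM0 : (0 : ℝ) < (q : ℝ) * M := by positivity
            exact one_div_le_one_div_of_le hqM0 (by linarith)
        calc ∑ m ∈ {x ∈ Finset.Ico (1 + q * M) (1 + q * M + M) | M.Coprime x}, (1 : ℝ) / m
            ≤ #{x ∈ Finset.Ico (1 + q * M) (1 + q * M + M) | M.Coprime x} • bnd :=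
              Finset.sum_le_card_nsmul _ _ _ hb
          _ = (M.totient : ℝ) * bnd := by rw [hcard, nsmul_eq_mul]
      rcases Nat.eq_zero_or_pos q with rfl | hq
      · have h1 : Finset.Ico 1 (1 + 0 * M) = ∅ := by simp
        have h3 : Finset.Ico (1 : ℕ) (0 + 1) = ∅ := by simp
        rw [h1, h3]
        simp only [Finset.filter_empty, Finset.sum_empty, zero_add, mul_zero, add_zero, mul_one]
        have hbnd1 : bnd = 1 := by rw [hbnd]; simp
        rw [hbnd1, mul_one] at hblock
        exact hblock
      · have hsum : ∑ j ∈ Finset.Ico 1 (q + 1), (1 : ℝ) / j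
            = (∑ j ∈ Finset.Ico 1 q, (1 : ℝ) / j) + 1 / q :=
          Finset.sum_Ico_succ_top hq _
        have hbnd' : bnd = 1 / ((q : ℝ) * M) := by
          rw [hbnd, if_neg (by omega)]
        refine le_trans (add_le_add ih hblock) ?_
        rw [hsum, hbnd']
        apply le_of_eq
        have hq0 : (q : ℝ) ≠ 0 := by
          have : (1:ℝ) ≤ (q:ℝ) := by exact_mod_cast hq
          linarith
        field_simp
        ring



open Finset

set_option maxHeartbeats 1000000 in
lemma SW_lower (M : ℕ) (hM : M ≠ 0) (ε : ℝ) (hε : 0 < ε) :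
    ∃ X : ℕ, 1 ≤ X ∧
      (∑ d ∈ M.divisors, (1 : ℝ) / d)⁻¹ - ε ≤
        ((M.totient : ℝ) / M) * ∑ v ∈ {v ∈ Finset.Icc 1 X | WP M v}, (1 : ℝ) / v := by
  classical
  set D := ∑ d ∈ M.divisors, (1 : ℝ) / d with hD
  have hMR : (0 : ℝ) < M := by exact_mod_cast Nat.pos_of_ne_zero hM
  have hφ : (0 : ℝ) < M.totient := by
    have := Nat.totient_pos.2 (Nat.pos_of_ne_zero hM)
    exact_mod_cast this
  set c := (M.totient : ℝ) / M with hc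
  have hc0 : 0 < c := by rw [hc]; positivity
  have hD1 : (1 : ℝ) ≤ D := by
    have h1 : (1 : ℕ) ∈ M.divisors := Nat.one_mem_divisors.2 hM
    rw [hD]
    calc (1 : ℝ) = 1 / ((1 : ℕ) : ℝ) := by norm_num
      _ ≤ ∑ d ∈ M.divisors, (1 : ℝ) / d :=
        Finset.single_le_sum (f := fun d : ℕ => (1 : ℝ) / d) (fun d _ => by positivity) h1
  have hD0 : (0 : ℝ) < D := by linarith
  by_cases hle : D⁻¹ ≤ ε
  · refine ⟨1, le_refl 1, ?_⟩
    have h0 : (0 : ℝ) ≤ ((M.totient : ℝ) / M) *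
        ∑ v ∈ {v ∈ Finset.Icc 1 1 | WP M v}, (1 : ℝ) / v := by
      apply mul_nonneg (by positivity)
      exact Finset.sum_nonneg fun v _ => by positivity
    linarith
  push_neg at hle
  have hεD : ε * D < 1 := by
    have h := mul_lt_mul_of_pos_right hle hD0
    rwa [inv_mul_cancel₀ (ne_of_gt hD0)] at h
  have hεDc : (0 : ℝ) < ε * D * c := mul_pos (mul_pos hε hD0) hc0
  set B := ((M.totient : ℝ) + c) / (ε * D * c) with hB
  have hB0 : 0 < B := div_pos (by linarith) hεDc
  have hBmul : ε * D * c * B = (M.totient : ℝ) + c := by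
    rw [hB]
    field_simp
  clear_value B
  set X := ⌈Real.exp B⌉₊ with hX
  have hX1 : 1 ≤ X := Nat.one_le_ceil_iff.2 (Real.exp_pos B)
  have hXR : Real.exp B ≤ X := Nat.le_ceil _
  clear_value X
  have hlogX : B ≤ Real.log X := by
    rw [← Real.log_exp B]
    exact Real.log_le_log (Real.exp_pos B) hXR
  have hL0 : 0 < Real.log X := lt_of_lt_of_le hB0 hlogX
  refine ⟨X, hX1, ?_⟩
  set W₀ := {v ∈ Finset.Icc 1 X | WP M v} with hW₀
  set SW := ∑ v ∈ W₀, (1 : ℝ) / v with hSW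
  set CX := {m ∈ Finset.Icc 1 X | M.Coprime m} with hCX
  set HC := ∑ m ∈ CX, (1 : ℝ) / m with hHC
  set HX := ∑ n ∈ Finset.Icc 1 X, (1 : ℝ) / n with hHX
  have hSW0 : 0 ≤ SW := Finset.sum_nonneg fun v _ => by positivity
  have hHC0 : 0 ≤ HC := Finset.sum_nonneg fun v _ => by positivity
  -- (1) log X ≤ HX
  have h1 : Real.log X ≤ HX := by
    have hh := log_add_one_le_harmonic X
    have h2 : ((harmonic X : ℚ) : ℝ) = HX := by
      rw [harmonic_eq_sum_Icc]
      push_cast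
      exact Finset.sum_congr rfl fun i _ => (one_div _).symm
    have h3 : Real.log X ≤ Real.log ((X : ℝ) + 1) := by
      have := lognat_mono (Nat.le_succ X)
      push_cast at this
      exact this
    push_cast at hh
    linarith
  -- (2) HX ≤ D * (SW * HC)
  have h2 : HX ≤ D * (SW * HC) := by
    set F := M.divisors ×ˢ (W₀ ×ˢ CX) with hF
    have hex : ∀ n ∈ Finset.Icc 1 X, ∃ t : ℕ × ℕ × ℕ, t ∈ F ∧ t.1 * (t.2.1 * t.2.2) = n := by
      intro n hn
      rw [Finset.mem_Icc] at hn
      have hn0 : n ≠ 0 := by omega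
      obtain ⟨d, v, m, hd, hv, hm, he⟩ := decomp M hM n hn0
      have hv0 : v ≠ 0 := by rintro rfl; simp at he; omega
      have hm0 : m ≠ 0 := by rintro rfl; simp at he; omega
      have hvn : v ∣ n := ⟨d * m, by rw [he]; ring⟩
      have hmn : m ∣ n := ⟨d * v, by rw [he]; ring⟩
      refine ⟨(d, v, m), ?_, by rw [he]; ring⟩
      rw [hF, Finset.mem_product, Finset.mem_product]
      refine ⟨Nat.mem_divisors.2 ⟨hd, hM⟩, ?_, ?_⟩
      · rw [hW₀, Finset.mem_filter, Finset.mem_Icc]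
        exact ⟨⟨Nat.pos_of_ne_zero hv0, le_trans (Nat.le_of_dvd (by omega) hvn) hn.2⟩, hv⟩
      · rw [hCX, Finset.mem_filter, Finset.mem_Icc]
        exact ⟨⟨Nat.pos_of_ne_zero hm0, le_trans (Nat.le_of_dvd (by omega) hmn) hn.2⟩, hm⟩
    choose! f hfF hfn using hex
    have himage : (Finset.Icc 1 X).image f ⊆ F := by
      intro t ht
      obtain ⟨n, hn, rfl⟩ := Finset.mem_image.1 ht
      exact hfF n hn
    have hstep : HX = ∑ t ∈ (Finset.Icc 1 X).image f,
        (1 : ℝ) / t.1 * ((1 : ℝ) / t.2.1 * ((1 : ℝ) / t.2.2)) := by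
      rw [Finset.sum_image (fun a ha b hb h => by rw [← hfn a ha, ← hfn b hb, h])]
      refine Finset.sum_congr rfl fun n hn => ?_
      have h := hfn n hn
      rw [one_div_mul_one_div, one_div_mul_one_div, ← Nat.cast_mul, ← Nat.cast_mul, h]
    have hmono : ∑ t ∈ (Finset.Icc 1 X).image f,
        (1 : ℝ) / t.1 * ((1 : ℝ) / t.2.1 * ((1 : ℝ) / t.2.2))
        ≤ ∑ t ∈ F, (1 : ℝ) / t.1 * ((1 : ℝ) / t.2.1 * ((1 : ℝ) / t.2.2)) :=
      Finset.sum_le_sum_of_subset_of_nonneg himage (fun t _ _ => by positivity)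
    have hfactor : ∑ t ∈ F, (1 : ℝ) / t.1 * ((1 : ℝ) / t.2.1 * ((1 : ℝ) / t.2.2))
        = D * (SW * HC) := by
      have e1 : SW * HC = ∑ p ∈ W₀ ×ˢ CX, (1 : ℝ) / p.1 * ((1 : ℝ) / p.2) := by
        rw [hSW, hHC, Finset.sum_mul_sum]
        exact (Finset.sum_product' _ _ (fun (v m : ℕ) => (1 : ℝ) / v * ((1 : ℝ) / m))).symm
      rw [e1, hD, Finset.sum_mul_sum, hF]
      exact Finset.sum_product' _ _
        (fun (d : ℕ) (p : ℕ × ℕ) => (1 : ℝ) / d * ((1 : ℝ) / p.1 * ((1 : ℝ) / p.2)))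
    rw [hstep, ← hfactor]
    exact hmono
  -- (3) HC bound
  have h3 : HC ≤ (M.totient : ℝ) * (1 + (1 / M) * (1 + Real.log X)) := by
    have hsub : CX ⊆ {m ∈ Finset.Ico 1 (1 + X * M) | M.Coprime m} := by
      rw [hCX]
      apply Finset.filter_subset_filter
      intro m hm
      rw [Finset.mem_Icc] at hm
      rw [Finset.mem_Ico]
      have : X ≤ X * M := Nat.le_mul_of_pos_right X (Nat.pos_of_ne_zero hM)
      omega
    have hstep : HC ≤ ∑ m ∈ {m ∈ Finset.Ico 1 (1 + X * M) | M.Coprime m}, (1 : ℝ) / m :=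
      Finset.sum_le_sum_of_subset_of_nonneg hsub (fun m _ _ => by positivity)
    have hch := coprime_harmonic M hM X
    have hlast : ∑ j ∈ Finset.Ico 1 X, (1 : ℝ) / j ≤ 1 + Real.log X := by
      have hIco : Finset.Ico 1 X = Finset.Icc 1 (X - 1) := by
        rw [← Finset.Ico_add_one_right_eq_Icc]
        congr 1
        omega
      have hharm : ∑ j ∈ Finset.Ico 1 X, (1 : ℝ) / j = ((harmonic (X - 1) : ℚ) : ℝ) := by
        rw [hIco, harmonic_eq_sum_Icc]
        push_cast
        exact Finset.sum_congr rfl fun i _ => one_div _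
      rw [hharm]
      have hb := harmonic_le_one_add_log (X - 1)
      push_cast at hb
      have hmm := lognat_mono (show X - 1 ≤ X by omega)
      linarith
    calc HC ≤ ∑ m ∈ {m ∈ Finset.Ico 1 (1 + X * M) | M.Coprime m}, (1 : ℝ) / m := hstep
      _ ≤ (M.totient : ℝ) * (1 + (1 / M) * ∑ j ∈ Finset.Ico 1 X, (1 : ℝ) / j) := hch
      _ ≤ (M.totient : ℝ) * (1 + (1 / M) * (1 + Real.log X)) := by
          apply mul_le_mul_of_nonneg_left _ (le_of_lt hφ)
          have h1M : (0 : ℝ) ≤ 1 / (M : ℝ) := by positivity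
          nlinarith
  -- (4) assemble
  set L := Real.log X with hLdef
  set Q := (M.totient : ℝ) * (1 + (1 / M) * (1 + L)) with hQ
  have hQ' : Q = (M.totient : ℝ) + c + c * L := by
    rw [hQ, hc]
    field_simp
    ring
  have hQ0 : 0 < Q := by
    rw [hQ']
    have := mul_pos hc0 hL0
    linarith
  have h4 : L ≤ D * SW * Q := by
    calc L ≤ HX := h1
      _ ≤ D * (SW * HC) := h2
      _ ≤ D * (SW * Q) := by
          apply mul_le_mul_of_nonneg_left _ (le_of_lt hD0)
          exact mul_le_mul_of_nonneg_left h3 hSW0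
      _ = D * SW * Q := by ring
  -- (5) final algebra
  have hLB : (M.totient : ℝ) + c ≤ ε * D * c * L := by
    have h := mul_le_mul_of_nonneg_left hlogX (le_of_lt hεDc)
    rw [hBmul] at h
    exact h
  have e3 : (1 - ε * D) * Q ≤ c * L := by
    rw [hQ']
    have hεDpos : (0 : ℝ) ≤ ε * D * ((M.totient : ℝ) + c) := by positivity
    nlinarith
  have e2 : c * L ≤ (c * SW) * (D * Q) := by
    calc c * L ≤ c * (D * SW * Q) := mul_le_mul_of_nonneg_left h4 (le_of_lt hc0)
      _ = (c * SW) * (D * Q) := by ring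
  have key : (D⁻¹ - ε) * (D * Q) ≤ (c * SW) * (D * Q) := by
    have e1 : (D⁻¹ - ε) * (D * Q) = (1 - ε * D) * Q := by
      have hDD : D⁻¹ * D = 1 := inv_mul_cancel₀ (ne_of_gt hD0)
      calc (D⁻¹ - ε) * (D * Q) = (D⁻¹ * D) * Q - (ε * D) * Q := by ring
        _ = (1 - ε * D) * Q := by rw [hDD]; ring
    rw [e1]
    exact le_trans e3 e2
  have hDQ : 0 < D * Q := mul_pos hD0 hQ0
  exact le_of_mul_le_mul_right key hDQ

end ChainsUB

set_option maxHeartbeats 4000000 in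
open Finset in
theorem chains_upper_bound
    (ℓ : ℕ) (hℓ : 1 ≤ ℓ) (𝔞 : ℕ → Finset ℕ)
    (hne : ∀ i ∈ Finset.Icc 1 ℓ, (𝔞 i).Nonempty)
    (hpos : ∀ i ∈ Finset.Icc 1 ℓ, ∀ a ∈ 𝔞 i, 0 < a)
    (hchain : ∀ i : ℕ, 1 ≤ i → i < ℓ → 𝔞 i ⊂ 𝔞 (i + 1))
    (M : ℕ) (hM : M = (𝔞 ℓ).lcm id)
    (δ : ℝ) (hδ : δ = (∑ d ∈ M.divisors, (1 : ℝ) / d)⁻¹)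
    (r : ℕ → ℕ)
    (hr : ∀ i ∈ Finset.Icc 1 ℓ,
      r i = ((𝔞 i).powerset.image
        (fun s : Finset ℕ => ∑ a ∈ s, (1 : ℚ) / (a : ℚ))).card) :
    Filter.atTop.limsup (fun N : ℕ => Real.log (egyptianFractions N).card / N)
      ≤ Real.log 2 - δ * ∑ i ∈ Finset.Icc 1 ℓ,
          ((1 : ℝ) / (((𝔞 i).sup id : ℕ) : ℝ) -
            (if i < ℓ then (1 : ℝ) / (((𝔞 (i + 1)).sup id : ℕ) : ℝ) else 0)) *
          Real.log ((2 : ℝ) ^ (𝔞 i).card / (r i : ℝ)) := by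
  classical
  -- chain monotonicity
  have hmono : ∀ j i : ℕ, 1 ≤ i → i ≤ j → j ≤ ℓ → 𝔞 i ⊆ 𝔞 j := by
    intro j
    induction j with
    | zero => intro i hi hij _; exact absurd (le_trans hi hij) (by omega)
    | succ j ih =>
        intro i hi hij hjl
        rcases Nat.eq_or_lt_of_le hij with heq | hlt
        · exact heq ▸ subset_rfl
        · have h1 : i ≤ j := by omega
          have h2 : 1 ≤ j := by omega
          exact (ih i hi h1 (by omega)).trans (hchain j h2 (by omega)).subset
  have hM0 : M ≠ 0 := by
    rw [hM, Ne, Finset.lcm_eq_zero_iff]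
    intro h
    obtain ⟨a, ha, h0⟩ := h
    have := hpos ℓ (Finset.mem_Icc.2 ⟨hℓ, le_rfl⟩) a (Finset.mem_coe.1 ha)
    simp only [id] at h0
    omega
  have hMR : (1 : ℝ) ≤ (M : ℝ) := by exact_mod_cast Nat.pos_of_ne_zero hM0
  have haM : ∀ i, 1 ≤ i → i ≤ ℓ → ∀ a ∈ 𝔞 i, a ∣ M := by
    intro i h1 h2 a ha
    rw [hM]
    exact Finset.dvd_lcm (hmono ℓ i h1 h2 le_rfl ha)
  have hapos : ∀ i, 1 ≤ i → i ≤ ℓ → ∀ a ∈ 𝔞 i, 1 ≤ a := fun i h1 h2 a ha =>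
    hpos i (Finset.mem_Icc.2 ⟨h1, h2⟩) a ha
  have hMx1 : ∀ i, 1 ≤ i → i ≤ ℓ → 1 ≤ (𝔞 i).sup id := by
    intro i h1 h2
    obtain ⟨a, ha⟩ := hne i (Finset.mem_Icc.2 ⟨h1, h2⟩)
    exact le_trans (hapos i h1 h2 a ha) (Finset.le_sup (f := id) ha)
  have hMxmono : ∀ i j, 1 ≤ i → i ≤ j → j ≤ ℓ → (𝔞 i).sup id ≤ (𝔞 j).sup id :=
    fun i j h1 h2 h3 => Finset.sup_mono (hmono j i h1 h2 h3)
  -- r facts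
  have hregy : ∀ i, 1 ≤ i → i ≤ ℓ → r i = (ChainsUB.egy (𝔞 i)).card := fun i h1 h2 =>
    hr i (Finset.mem_Icc.2 ⟨h1, h2⟩)
  have hr1 : ∀ i, 1 ≤ i → i ≤ ℓ → 1 ≤ r i := by
    intro i h1 h2
    rw [hregy i h1 h2]
    exact ChainsUB.one_le_egy_card _
  have hrle : ∀ i, 1 ≤ i → i ≤ ℓ → r i ≤ 2 ^ (𝔞 i).card := by
    intro i h1 h2
    rw [hregy i h1 h2]
    exact ChainsUB.egy_card_le_two_pow _
  have hrposR : ∀ i, 1 ≤ i → i ≤ ℓ → (0 : ℝ) < (r i : ℝ) := by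
    intro i h1 h2
    exact_mod_cast hr1 i h1 h2
  -- log factors nonneg
  have hL0 : ∀ i, 1 ≤ i → i ≤ ℓ → 0 ≤ Real.log ((2 : ℝ) ^ (𝔞 i).card / (r i : ℝ)) := by
    intro i h1 h2
    apply Real.log_nonneg
    rw [le_div_iff₀ (hrposR i h1 h2), one_mul]
    exact_mod_cast hrle i h1 h2
  have ht0 : ∀ i, 1 ≤ i → i ≤ ℓ →
      0 ≤ (1 : ℝ) / (((𝔞 i).sup id : ℕ) : ℝ) -
        (if i < ℓ then (1 : ℝ) / (((𝔞 (i + 1)).sup id : ℕ) : ℝ) else 0) := by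
    intro i h1 h2
    by_cases h : i < ℓ
    · rw [if_pos h]
      apply sub_nonneg.2
      apply one_div_le_one_div_of_le
      · exact_mod_cast hMx1 i h1 h2
      · exact_mod_cast hMxmono i (i+1) h1 (Nat.le_succ i) (by omega)
    · rw [if_neg h, sub_zero]
      positivity
  set SIG := ∑ i ∈ Finset.Icc 1 ℓ,
      ((1 : ℝ) / (((𝔞 i).sup id : ℕ) : ℝ) -
        (if i < ℓ then (1 : ℝ) / (((𝔞 (i + 1)).sup id : ℕ) : ℝ) else 0)) *
      Real.log ((2 : ℝ) ^ (𝔞 i).card / (r i : ℝ)) with hSIG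
  have hSIG0 : 0 ≤ SIG := by
    rw [hSIG]
    apply Finset.sum_nonneg
    intro i hi
    rw [Finset.mem_Icc] at hi
    exact mul_nonneg (ht0 i hi.1 hi.2) (hL0 i hi.1 hi.2)
  -- δ facts
  have hD1 : (1 : ℝ) ≤ ∑ d ∈ M.divisors, (1 : ℝ) / d := by
    have h1 : (1 : ℕ) ∈ M.divisors := Nat.one_mem_divisors.2 hM0
    calc (1 : ℝ) = 1 / ((1 : ℕ) : ℝ) := by norm_num
      _ ≤ ∑ d ∈ M.divisors, (1 : ℝ) / d :=
        Finset.single_le_sum (f := fun d : ℕ => (1 : ℝ) / d) (fun d _ => by positivity) h1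
  have hδ0 : 0 < δ := by rw [hδ]; exact inv_pos.2 (by linarith)
  have hδ1 : δ ≤ 1 := by rw [hδ]; exact inv_le_one_of_one_le₀ hD1
  -- epsilon reduction
  refine le_of_forall_pos_le_add fun ε' hε' => ?_
  set ε := min δ (ε' / (SIG + 1)) with hεd
  have hε0 : 0 < ε := lt_min hδ0 (div_pos hε' (by linarith))
  obtain ⟨X, hX1, hSWb⟩ := ChainsUB.SW_lower M hM0 ε hε0
  set W₀ := {v ∈ Finset.Icc 1 X | ChainsUB.WP M v} with hW₀
  set SW := ∑ v ∈ W₀, (1 : ℝ) / v with hSWd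
  set β := δ - ε with hβd
  have hβ0 : 0 ≤ β := by
    rw [hβd]
    have := min_le_left δ (ε' / (SIG + 1))
    rw [hεd]
    linarith [min_le_left δ (ε' / (SIG + 1))]
  have hβ1 : β ≤ 1 := by
    rw [hβd]
    linarith [hε0]
  have hβSW : β ≤ (M.totient : ℝ) / M * SW := by
    rw [hβd, hδ]
    exact hSWb
  have hφ1 : (1 : ℝ) ≤ (M.totient : ℝ) := by
    exact_mod_cast Nat.totient_pos.2 (Nat.pos_of_ne_zero hM0)
  set K := (W₀.card : ℝ) * (M.totient : ℝ) + 1 with hKd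
  set SL := ∑ i ∈ Finset.Icc 1 ℓ, Real.log ((2 : ℝ) ^ (𝔞 i).card / (r i : ℝ)) with hSLd
  have hSL0 : 0 ≤ SL := by
    rw [hSLd]
    apply Finset.sum_nonneg
    intro i hi
    rw [Finset.mem_Icc] at hi
    exact hL0 i hi.1 hi.2
  have hK0 : 0 ≤ K := by
    rw [hKd]
    positivity
  have hεle : ε ≤ ε' / (SIG + 1) := by
    rw [hεd]
    exact min_le_right _ _
  clear_value SIG ε β K SL SW W₀
  -- ================= main per-N bound =================
  have hbound : ∀ N : ℕ, 1 ≤ N →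
      Real.log (egyptianFractions N).card / N ≤ (Real.log 2 - β * SIG) + K * SL / N := by
    intro N hN
    have hNR : (0 : ℝ) < N := by exact_mod_cast hN
    set b : ℕ → ℕ := fun i => if i ≤ ℓ then N / ((𝔞 i).sup id) else 0 with hbd
    set cms : ℕ → ℕ → Finset ℕ :=
      fun i v => {m ∈ Finset.Ioc (b (i + 1) / v) (b i / v) | M.Coprime m} with hcmsd
    set Λ : Finset ((_ : ℕ) × (_ : ℕ) × ℕ) :=
      (Finset.Icc 1 ℓ).sigma (fun i => W₀.sigma (fun v => cms i v)) with hΛd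
    set Bk : ((_ : ℕ) × (_ : ℕ) × ℕ) → Finset ℕ :=
      (fun t => (𝔞 t.1).image (fun a => t.2.1 * t.2.2 * a)) with hBkd
    have hbmono : ∀ i j, 1 ≤ i → i ≤ j → b j ≤ b i := by
      intro i j h1 h2
      rw [hbd]
      by_cases hjl : j ≤ ℓ
      · have hil : i ≤ ℓ := le_trans h2 hjl
        simp only [if_pos hjl, if_pos hil]
        exact Nat.div_le_div_left (hMxmono i j h1 h2 hjl) (hMx1 i h1 hil)
      · simp only [if_neg hjl]
        exact Nat.zero_le _
    have hble : ∀ i, i ≤ ℓ → b i = N / ((𝔞 i).sup id) := by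
      intro i hi
      rw [hbd]
      simp only [if_pos hi]
    have hbz : ∀ i, ℓ < i → b i = 0 := by
      intro i hi
      rw [hbd]
      simp only [if_neg (by omega : ¬ i ≤ ℓ)]
    clear_value b
    -- membership decoding
    have hΛmem : ∀ t : ((_ : ℕ) × (_ : ℕ) × ℕ), t ∈ Λ →
        (1 ≤ t.1 ∧ t.1 ≤ ℓ) ∧ (1 ≤ t.2.1 ∧ ChainsUB.WP M t.2.1) ∧
        (b (t.1 + 1) / t.2.1 < t.2.2 ∧ t.2.2 ≤ b t.1 / t.2.1 ∧ M.Coprime t.2.2) := by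
      intro t ht
      rw [hΛd, Finset.mem_sigma, Finset.mem_sigma] at ht
      obtain ⟨h1, h2, h3⟩ := ht
      rw [Finset.mem_Icc] at h1
      rw [hW₀, Finset.mem_filter, Finset.mem_Icc] at h2
      rw [hcmsd, Finset.mem_filter, Finset.mem_Ioc] at h3
      exact ⟨h1, ⟨h2.1.1, h2.2⟩, h3.1.1, h3.1.2, h3.2⟩
    have hmempos : ∀ t : ((_ : ℕ) × (_ : ℕ) × ℕ), t ∈ Λ → 0 < t.2.2 := by
      intro t ht
      obtain ⟨_, _, hm1, _, _⟩ := hΛmem t ht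
      exact lt_of_le_of_lt (Nat.zero_le _) hm1
    have hvmpos : ∀ t : ((_ : ℕ) × (_ : ℕ) × ℕ), t ∈ Λ → 0 < t.2.1 * t.2.2 := by
      intro t ht
      obtain ⟨_, ⟨hv1, _⟩, hm1, _, _⟩ := hΛmem t ht
      exact Nat.mul_pos (by omega) (hmempos t ht)
    have hvm_ub : ∀ t : ((_ : ℕ) × (_ : ℕ) × ℕ), t ∈ Λ → t.2.1 * t.2.2 ≤ b t.1 := by
      intro t ht
      obtain ⟨_, ⟨hv1, _⟩, _, hm2, _⟩ := hΛmem t ht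
      have h := (Nat.le_div_iff_mul_le (by omega : 0 < t.2.1)).1 hm2
      calc t.2.1 * t.2.2 = t.2.2 * t.2.1 := Nat.mul_comm _ _
        _ ≤ b t.1 := h
    have hvm_lb : ∀ t : ((_ : ℕ) × (_ : ℕ) × ℕ), t ∈ Λ → b (t.1 + 1) < t.2.1 * t.2.2 := by
      intro t ht
      obtain ⟨_, ⟨hv1, _⟩, hm1, _, _⟩ := hΛmem t ht
      have h := (Nat.div_lt_iff_lt_mul (by omega : 0 < t.2.1)).1 hm1
      calc b (t.1 + 1) < t.2.2 * t.2.1 := h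
        _ = t.2.1 * t.2.2 := Nat.mul_comm _ _
    -- blocks inside [1, N]
    have hsub : ∀ t ∈ Λ, Bk t ⊆ Finset.Icc 1 N := by
      intro t ht x hx
      rw [hBkd] at hx
      obtain ⟨a, ha, rfl⟩ := Finset.mem_image.1 hx
      obtain ⟨⟨hi1, hi2⟩, ⟨hv1, _⟩, hm1, hm2, _⟩ := hΛmem t ht
      have ha1 : 1 ≤ a := hapos t.1 hi1 hi2 a ha
      rw [Finset.mem_Icc]
      constructor
      · exact Nat.mul_pos (hvmpos t ht) (by omega)
      · have hab : a ≤ (𝔞 t.1).sup id := Finset.le_sup (f := id) ha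
        have h1 : t.2.1 * t.2.2 * a ≤ b t.1 * ((𝔞 t.1).sup id) :=
          Nat.mul_le_mul (hvm_ub t ht) hab
        have h2 : b t.1 * ((𝔞 t.1).sup id) ≤ N := by
          rw [hble t.1 hi2]
          exact Nat.div_mul_le_self N _
        omega
    -- disjointness
    have hdisj : ∀ t ∈ Λ, ∀ t' ∈ Λ, t ≠ t' → Disjoint (Bk t) (Bk t') := by
      intro t ht t' ht' hne'
      rw [Finset.disjoint_left]
      intro x hx hx'
      rw [hBkd] at hx hx'
      obtain ⟨a, ha, hxa⟩ := Finset.mem_image.1 hx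
      obtain ⟨a', ha', hxa'⟩ := Finset.mem_image.1 hx'
      obtain ⟨⟨hi1, hi2⟩, ⟨hv1, hWv⟩, hm1, hm2, hcm⟩ := hΛmem t ht
      obtain ⟨⟨hi1', hi2'⟩, ⟨hv1', hWv'⟩, hm1', hm2', hcm'⟩ := hΛmem t' ht'
      have heqx : t.2.1 * t.2.2 * a = t'.2.1 * t'.2.2 * a' := by rw [hxa, hxa']
      have heqx2 : t.2.1 * (t.2.2 * a) = t'.2.1 * (t'.2.2 * a') := by
        rw [← mul_assoc, ← mul_assoc]; exact heqx
      have hm0 := hmempos t ht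
      have hm0' := hmempos t' ht'
      have hkey := ChainsUB.key_inj M hM0 (by omega : t.2.1 ≠ 0) (by omega : t.2.2 ≠ 0)
        (by omega : t'.2.1 ≠ 0) (by omega : t'.2.2 ≠ 0) hWv hWv' hcm hcm'
        (haM t.1 hi1 hi2 a ha) (haM t'.1 hi1' hi2' a' ha') heqx
      have hieq : t.1 = t'.1 := by
        by_contra hii
        have hvm : t.2.1 * t.2.2 = t'.2.1 * t'.2.2 := by rw [hkey.1, hkey.2]
        rcases Nat.lt_or_ge t.1 t'.1 with hlt | hge
        · have ha1 : b (t.1 + 1) < t.2.1 * t.2.2 := hvm_lb t ht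
          have ha2 : t'.2.1 * t'.2.2 ≤ b t'.1 := hvm_ub t' ht'
          have ha3 : b t'.1 ≤ b (t.1 + 1) := hbmono (t.1 + 1) t'.1 (by omega) (by omega)
          omega
        · have hlt' : t'.1 < t.1 := by omega
          have ha1 : b (t'.1 + 1) < t'.2.1 * t'.2.2 := hvm_lb t' ht'
          have ha2 : t.2.1 * t.2.2 ≤ b t.1 := hvm_ub t ht
          have ha3 : b t.1 ≤ b (t'.1 + 1) := hbmono (t'.1 + 1) t.1 (by omega) (by omega)
          omega
      apply hne'
      obtain ⟨i, v, m⟩ := t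
      obtain ⟨i', v', m'⟩ := t'
      simp only at hieq hkey
      rw [hieq, hkey.1, hkey.2]
    -- apply the family cardinality bound
    obtain ⟨hsumN, hcard⟩ := ChainsUB.egy_card_family Λ (Finset.Icc 1 N) Bk hsub hdisj
    have hIccN : (Finset.Icc 1 N).card = N := by
      rw [Nat.card_Icc]
      omega
    set cnt : ℕ → ℕ := fun i => ∑ v ∈ W₀, (cms i v).card with hcntd
    -- block cards
    have hBkcard : ∀ t : ((_ : ℕ) × (_ : ℕ) × ℕ), t ∈ Λ → (Bk t).card = (𝔞 t.1).card := by
      intro t ht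
      rw [hBkd]
      apply Finset.card_image_of_injective
      intro x y hxy
      have := hvmpos t ht
      exact Nat.eq_of_mul_eq_mul_left (by omega) hxy
    have hsizes : ∑ t ∈ Λ, (Bk t).card = ∑ i ∈ Finset.Icc 1 ℓ, cnt i * (𝔞 i).card := by
      rw [hΛd, Finset.sum_sigma]
      refine Finset.sum_congr rfl fun i hi => ?_
      rw [Finset.sum_sigma]
      calc ∑ v ∈ W₀, ∑ m ∈ cms i v, (Bk ⟨i, v, m⟩).card
          = ∑ v ∈ W₀, ∑ m ∈ cms i v, (𝔞 i).card := by
            refine Finset.sum_congr rfl fun v hv => Finset.sum_congr rfl fun m hm => ?_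
            apply hBkcard
            rw [hΛd, Finset.mem_sigma, Finset.mem_sigma]
            exact ⟨hi, hv, hm⟩
        _ = ∑ v ∈ W₀, (cms i v).card * (𝔞 i).card := by
            refine Finset.sum_congr rfl fun v hv => ?_
            rw [Finset.sum_const, smul_eq_mul]
        _ = cnt i * (𝔞 i).card := by
            rw [hcntd, Finset.sum_mul]
    have hprod : ∏ t ∈ Λ, (ChainsUB.egy (Bk t)).card ≤ ∏ i ∈ Finset.Icc 1 ℓ, r i ^ cnt i := by
      rw [hΛd, Finset.prod_sigma]
      apply Finset.prod_le_prod'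
      intro i hi
      rw [Finset.mem_Icc] at hi
      rw [Finset.prod_sigma]
      calc ∏ v ∈ W₀, ∏ m ∈ cms i v, (ChainsUB.egy (Bk ⟨i, v, m⟩)).card
          ≤ ∏ v ∈ W₀, ∏ m ∈ cms i v, r i := by
            apply Finset.prod_le_prod'
            intro v hv
            apply Finset.prod_le_prod'
            intro m hm
            have hvm0 : v * m ≠ 0 := by
              have h1 : 1 ≤ v := by
                rw [hW₀, Finset.mem_filter, Finset.mem_Icc] at hv
                exact hv.1.1
              have h2 : 0 < m := by
                rw [hcmsd, Finset.mem_filter, Finset.mem_Ioc] at hm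
                exact lt_of_le_of_lt (Nat.zero_le _) hm.1.1
              exact Nat.mul_ne_zero (by omega) (by omega)
            have hb1 : (ChainsUB.egy ((𝔞 i).image fun a => v * m * a)).card
                ≤ (ChainsUB.egy (𝔞 i)).card :=
              ChainsUB.egy_card_image_le (𝔞 i) (v * m) hvm0
            rw [hregy i hi.1 hi.2]
            exact hb1
        _ = ∏ v ∈ W₀, r i ^ (cms i v).card := by
            refine Finset.prod_congr rfl fun v _ => Finset.prod_const _
        _ = r i ^ cnt i := by
            rw [hcntd, Finset.prod_pow_eq_pow_sum]
    set σ₀ := ∑ i ∈ Finset.Icc 1 ℓ, cnt i * (𝔞 i).card with hσd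
    have hσN : σ₀ ≤ N := by
      rw [← hsizes, ← hIccN]
      exact hsumN
    have hEcard : (egyptianFractions N).card
        ≤ (∏ i ∈ Finset.Icc 1 ℓ, r i ^ cnt i) * 2 ^ (N - σ₀) := by
      have heq : egyptianFractions N = ChainsUB.egy (Finset.Icc 1 N) := rfl
      rw [heq]
      refine le_trans hcard ?_
      have hexp : (Finset.Icc 1 N).card - ∑ t ∈ Λ, (Bk t).card = N - σ₀ := by
        rw [hIccN, hsizes, hσd]
      rw [hexp]
      exact Nat.mul_le_mul_right _ hprod
    -- take logs
    have hEpos : (0 : ℝ) < ((egyptianFractions N).card : ℝ) := by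
      have : 1 ≤ (egyptianFractions N).card := ChainsUB.one_le_egy_card (Finset.Icc 1 N)
      exact_mod_cast this
    have hlogE : Real.log ((egyptianFractions N).card)
        ≤ (∑ i ∈ Finset.Icc 1 ℓ, (cnt i : ℝ) * Real.log (r i))
          + ((N : ℝ) - (σ₀ : ℝ)) * Real.log 2 := by
      have hcast : (((∏ i ∈ Finset.Icc 1 ℓ, r i ^ cnt i) * 2 ^ (N - σ₀) : ℕ) : ℝ)
          = (∏ i ∈ Finset.Icc 1 ℓ, (r i : ℝ) ^ cnt i) * (2 : ℝ) ^ (N - σ₀) := by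
        push_cast
        ring
      have h1 : Real.log ((egyptianFractions N).card)
          ≤ Real.log ((∏ i ∈ Finset.Icc 1 ℓ, (r i : ℝ) ^ cnt i) * (2 : ℝ) ^ (N - σ₀)) := by
        rw [← hcast]
        apply Real.log_le_log hEpos
        exact_mod_cast hEcard
      have hprodpos : ∀ i ∈ Finset.Icc 1 ℓ, ((r i : ℝ) ^ cnt i) ≠ 0 := by
        intro i hi
        rw [Finset.mem_Icc] at hi
        exact pow_ne_zero _ (ne_of_gt (hrposR i hi.1 hi.2))
      have h2 : Real.log ((∏ i ∈ Finset.Icc 1 ℓ, (r i : ℝ) ^ cnt i) * (2 : ℝ) ^ (N - σ₀))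
          = (∑ i ∈ Finset.Icc 1 ℓ, (cnt i : ℝ) * Real.log (r i))
            + ((N - σ₀ : ℕ) : ℝ) * Real.log 2 := by
        rw [Real.log_mul (Finset.prod_ne_zero_iff.2 hprodpos) (by positivity)]
        rw [Real.log_prod hprodpos, Real.log_pow]
        congr 1
        refine Finset.sum_congr rfl fun i _ => ?_
        rw [Real.log_pow]
      rw [h2] at h1
      have h3 : ((N - σ₀ : ℕ) : ℝ) = (N : ℝ) - (σ₀ : ℝ) := Nat.cast_sub hσN
      rw [h3] at h1
      exact h1
    -- count lower bound
    have hcntlow : ∀ i, 1 ≤ i → i ≤ ℓ →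
        β * ((N : ℝ) * ((1 : ℝ) / (((𝔞 i).sup id : ℕ) : ℝ) -
          (if i < ℓ then (1 : ℝ) / (((𝔞 (i + 1)).sup id : ℕ) : ℝ) else 0))) - K
          ≤ (cnt i : ℝ) := by
      intro i h1 h2
      have hMxiR : (1 : ℝ) ≤ (((𝔞 i).sup id : ℕ) : ℝ) := by exact_mod_cast hMx1 i h1 h2
      -- per-v bound
      have hv_bound : ∀ v ∈ W₀,
          ((M.totient : ℝ) / M) * ((1 : ℝ) / v) * ((b i : ℝ) - (b (i + 1) : ℝ))
            - (M.totient : ℝ) ≤ ((cms i v).card : ℝ) := by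
        intro v hv
        have hv1 : 1 ≤ v := by
          rw [hW₀, Finset.mem_filter, Finset.mem_Icc] at hv
          exact hv.1.1
        have hv0R : (0 : ℝ) < (v : ℝ) := by exact_mod_cast hv1
        have huw : b (i + 1) / v ≤ b i / v :=
          Nat.div_le_div_right (hbmono i (i + 1) h1 (Nat.le_succ i))
        have hcount : ((b i / v - b (i + 1) / v) / M) * M.totient ≤ (cms i v).card := by
          have hsub2 : Finset.Ico (b (i + 1) / v + 1)
              (b (i + 1) / v + 1 + ((b i / v - b (i + 1) / v) / M) * M)
              ⊆ Finset.Ioc (b (i + 1) / v) (b i / v) := by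
            intro x hx
            rw [Finset.mem_Ico] at hx
            rw [Finset.mem_Ioc]
            have := Nat.div_mul_le_self (b i / v - b (i + 1) / v) M
            omega
          calc ((b i / v - b (i + 1) / v) / M) * M.totient
              ≤ #{x ∈ Finset.Ico (b (i + 1) / v + 1)
                  (b (i + 1) / v + 1 + ((b i / v - b (i + 1) / v) / M) * M) | M.Coprime x} :=
                ChainsUB.coprime_count M _ _
            _ ≤ (cms i v).card := by
                rw [hcmsd]
                exact Finset.card_le_card (Finset.filter_subset_filter _ hsub2)
        -- real estimates
        set u := b (i + 1) / v with hud
        set w := b i / v with hwd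
        clear_value u w
        have hdm := Nat.div_add_mod (w - u) M
        have hmodlt : (w - u) % M < M := Nat.mod_lt _ (Nat.pos_of_ne_zero hM0)
        have hqR : (w : ℝ) - (u : ℝ) - (M : ℝ) + 1 ≤ (M : ℝ) * (((w - u) / M : ℕ) : ℝ) := by
          have hcast1 : (M : ℝ) * (((w - u) / M : ℕ) : ℝ) + (((w - u) % M : ℕ) : ℝ)
              = (((w - u) : ℕ) : ℝ) := by exact_mod_cast congrArg (Nat.cast : ℕ → ℝ) hdm
          have hq1 : (((w - u) : ℕ) : ℝ) = (w : ℝ) - (u : ℝ) := Nat.cast_sub huw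
          have hmR : (((w - u) % M : ℕ) : ℝ) + 1 ≤ (M : ℝ) := by
            exact_mod_cast hmodlt
          rw [hq1] at hcast1
          linarith
        have hwR : (b i : ℝ) / v - 1 ≤ (w : ℝ) := by
          have hdm2 : v * w + b i % v = b i := by rw [hwd]; exact Nat.div_add_mod (b i) v
          have hm2 : (b i) % v < v := Nat.mod_lt _ (by omega)
          have hcast2 : (v : ℝ) * (w : ℝ) + ((b i % v : ℕ) : ℝ) = ((b i : ℕ) : ℝ) := by
            exact_mod_cast congrArg (Nat.cast : ℕ → ℝ) hdm2
          have hm2R : ((b i % v : ℕ) : ℝ) < (v : ℝ) := by exact_mod_cast hm2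
          rw [sub_le_iff_le_add, div_le_iff₀ hv0R]
          nlinarith
        have huR : (u : ℝ) ≤ (b (i + 1) : ℝ) / v := by
          rw [le_div_iff₀ hv0R]
          have h := Nat.div_mul_le_self (b (i + 1)) v
          rw [hud]
          exact_mod_cast h
        have hchain1 : (b i : ℝ) / v - (b (i + 1) : ℝ) / v - (M : ℝ)
            ≤ (M : ℝ) * (((w - u) / M : ℕ) : ℝ) := by linarith
        have hcM : (0 : ℝ) ≤ (M.totient : ℝ) / M := by positivity
        have hfinal : ((M.totient : ℝ) / M) * ((b i : ℝ) / v - (b (i + 1) : ℝ) / v - (M : ℝ))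
            ≤ (M.totient : ℝ) * (((w - u) / M : ℕ) : ℝ) := by
          have hh := mul_le_mul_of_nonneg_left hchain1 hcM
          have hMne : (M : ℝ) ≠ 0 := by linarith
          calc ((M.totient : ℝ) / M) * ((b i : ℝ) / v - (b (i + 1) : ℝ) / v - (M : ℝ))
              ≤ ((M.totient : ℝ) / M) * ((M : ℝ) * (((w - u) / M : ℕ) : ℝ)) := hh
            _ = (M.totient : ℝ) * (((w - u) / M : ℕ) : ℝ) := by
                field_simp
        have hcountR : (M.totient : ℝ) * (((w - u) / M : ℕ) : ℝ) ≤ ((cms i v).card : ℝ) := by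
          rw [mul_comm]
          exact_mod_cast hcount
        have hid : ((M.totient : ℝ) / M) * ((1 : ℝ) / v) * ((b i : ℝ) - (b (i + 1) : ℝ))
            - (M.totient : ℝ)
            = ((M.totient : ℝ) / M) * ((b i : ℝ) / v - (b (i + 1) : ℝ) / v - (M : ℝ)) := by
          have hMne : (M : ℝ) ≠ 0 := by linarith
          have hvne : (v : ℝ) ≠ 0 := ne_of_gt hv0R
          field_simp
        rw [hid]
        linarith
      -- sum over v
      have hΔ0 : (0 : ℝ) ≤ (b i : ℝ) - (b (i + 1) : ℝ) := by
        have := hbmono i (i + 1) h1 (Nat.le_succ i)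
        have hcast : ((b (i + 1) : ℕ) : ℝ) ≤ ((b i : ℕ) : ℝ) := by exact_mod_cast this
        linarith
      have hsumid : ∑ v ∈ W₀, (((M.totient : ℝ) / M) * ((1 : ℝ) / v)
            * ((b i : ℝ) - (b (i + 1) : ℝ)) - (M.totient : ℝ))
          = ((M.totient : ℝ) / M) * SW * ((b i : ℝ) - (b (i + 1) : ℝ))
            - (W₀.card : ℝ) * (M.totient : ℝ) := by
        rw [Finset.sum_sub_distrib, Finset.sum_const, nsmul_eq_mul]
        congr 1
        rw [hSWd, Finset.mul_sum, Finset.sum_mul]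
      have hsum_v : ((M.totient : ℝ) / M) * SW * ((b i : ℝ) - (b (i + 1) : ℝ))
          - (W₀.card : ℝ) * (M.totient : ℝ) ≤ (cnt i : ℝ) := by
        rw [← hsumid]
        refine le_trans (Finset.sum_le_sum hv_bound) ?_
        rw [hcntd]
        push_cast
        exact le_refl _
      have hbeta : β * ((b i : ℝ) - (b (i + 1) : ℝ))
          ≤ ((M.totient : ℝ) / M) * SW * ((b i : ℝ) - (b (i + 1) : ℝ)) :=
        mul_le_mul_of_nonneg_right hβSW hΔ0
      -- b i vs N / Mx i
      have he1 : (N : ℝ) / (((𝔞 i).sup id : ℕ) : ℝ) - 1 ≤ (b i : ℝ) := by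
        rw [hble i h2]
        have hdm3 := Nat.div_add_mod N ((𝔞 i).sup id)
        have hm3 : N % ((𝔞 i).sup id) < (𝔞 i).sup id := Nat.mod_lt _ (hMx1 i h1 h2)
        have hcast3 : (((𝔞 i).sup id * (N / (𝔞 i).sup id) + N % (𝔞 i).sup id : ℕ) : ℝ)
            = (N : ℝ) := by exact_mod_cast congrArg (Nat.cast : ℕ → ℝ) hdm3
        push_cast at hcast3
        have hm3R : ((N % (𝔞 i).sup id : ℕ) : ℝ) < (((𝔞 i).sup id : ℕ) : ℝ) := by
          exact_mod_cast hm3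
        rw [sub_le_iff_le_add, div_le_iff₀ (by linarith : (0:ℝ) < (((𝔞 i).sup id : ℕ) : ℝ))]
        nlinarith
      have he2 : (b (i + 1) : ℝ) ≤ (N : ℝ) *
          (if i < ℓ then (1 : ℝ) / (((𝔞 (i + 1)).sup id : ℕ) : ℝ) else 0) := by
        by_cases hil : i < ℓ
        · rw [if_pos hil, hble (i + 1) (by omega)]
          rw [mul_one_div, le_div_iff₀ (by
            exact_mod_cast hMx1 (i + 1) (by omega) (by omega) : (0:ℝ) <
              (((𝔞 (i + 1)).sup id : ℕ) : ℝ))]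
          exact_mod_cast Nat.div_mul_le_self N ((𝔞 (i + 1)).sup id)
        · rw [if_neg hil, hbz (i + 1) (by omega)]
          simp
      have hNt : (N : ℝ) * ((1 : ℝ) / (((𝔞 i).sup id : ℕ) : ℝ) -
          (if i < ℓ then (1 : ℝ) / (((𝔞 (i + 1)).sup id : ℕ) : ℝ) else 0)) - 1
          ≤ (b i : ℝ) - (b (i + 1) : ℝ) := by
        have hexpand : (N : ℝ) * ((1 : ℝ) / (((𝔞 i).sup id : ℕ) : ℝ) -
            (if i < ℓ then (1 : ℝ) / (((𝔞 (i + 1)).sup id : ℕ) : ℝ) else 0))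
            = (N : ℝ) / (((𝔞 i).sup id : ℕ) : ℝ) - (N : ℝ) *
              (if i < ℓ then (1 : ℝ) / (((𝔞 (i + 1)).sup id : ℕ) : ℝ) else 0) := by
          ring
        rw [hexpand]
        linarith
      have hbNt : β * ((N : ℝ) * ((1 : ℝ) / (((𝔞 i).sup id : ℕ) : ℝ) -
          (if i < ℓ then (1 : ℝ) / (((𝔞 (i + 1)).sup id : ℕ) : ℝ) else 0)) - 1)
          ≤ β * ((b i : ℝ) - (b (i + 1) : ℝ)) :=
        mul_le_mul_of_nonneg_left hNt hβ0
      rw [hKd]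
      nlinarith [hsum_v, hbeta, hbNt, hβ1, hβ0]
    -- assemble the per-N inequality
    have hLiid : ∀ i, 1 ≤ i → i ≤ ℓ → Real.log ((2 : ℝ) ^ (𝔞 i).card / (r i : ℝ))
        = ((𝔞 i).card : ℝ) * Real.log 2 - Real.log (r i) := by
      intro i h1 h2
      rw [Real.log_div (by positivity) (ne_of_gt (hrposR i h1 h2)), Real.log_pow]
    have hsumLlow : β * (N : ℝ) * SIG - K * SL
        ≤ ∑ i ∈ Finset.Icc 1 ℓ, (cnt i : ℝ) * Real.log ((2 : ℝ) ^ (𝔞 i).card / (r i : ℝ)) := by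
      have hterm : ∀ i ∈ Finset.Icc 1 ℓ,
          (β * ((N : ℝ) * ((1 : ℝ) / (((𝔞 i).sup id : ℕ) : ℝ) -
            (if i < ℓ then (1 : ℝ) / (((𝔞 (i + 1)).sup id : ℕ) : ℝ) else 0))) - K)
            * Real.log ((2 : ℝ) ^ (𝔞 i).card / (r i : ℝ))
          ≤ (cnt i : ℝ) * Real.log ((2 : ℝ) ^ (𝔞 i).card / (r i : ℝ)) := by
        intro i hi
        rw [Finset.mem_Icc] at hi
        exact mul_le_mul_of_nonneg_right (hcntlow i hi.1 hi.2) (hL0 i hi.1 hi.2)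
      calc β * (N : ℝ) * SIG - K * SL
          = ∑ i ∈ Finset.Icc 1 ℓ,
            ((β * ((N : ℝ) * ((1 : ℝ) / (((𝔞 i).sup id : ℕ) : ℝ) -
              (if i < ℓ then (1 : ℝ) / (((𝔞 (i + 1)).sup id : ℕ) : ℝ) else 0))) - K)
              * Real.log ((2 : ℝ) ^ (𝔞 i).card / (r i : ℝ))) := by
            rw [hSIG, hSLd, Finset.mul_sum, Finset.mul_sum, ← Finset.sum_sub_distrib]
            refine Finset.sum_congr rfl fun i _ => ?_
            ring
        _ ≤ _ := Finset.sum_le_sum hterm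
    have hcntk : (σ₀ : ℝ) = ∑ i ∈ Finset.Icc 1 ℓ, (cnt i : ℝ) * ((𝔞 i).card : ℝ) := by
      rw [hσd]
      push_cast
      rfl
    have hsplit2 : ∑ i ∈ Finset.Icc 1 ℓ,
        (cnt i : ℝ) * Real.log ((2 : ℝ) ^ (𝔞 i).card / (r i : ℝ))
        = (σ₀ : ℝ) * Real.log 2 - ∑ i ∈ Finset.Icc 1 ℓ, (cnt i : ℝ) * Real.log (r i) := by
      rw [hcntk, Finset.sum_mul, ← Finset.sum_sub_distrib]
      refine Finset.sum_congr rfl fun i hi => ?_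
      rw [Finset.mem_Icc] at hi
      rw [hLiid i hi.1 hi.2]
      ring
    have hfinalN : Real.log ((egyptianFractions N).card)
        ≤ (N : ℝ) * Real.log 2 - (β * (N : ℝ) * SIG - K * SL) := by
      have h1 : Real.log ((egyptianFractions N).card)
          ≤ (N : ℝ) * Real.log 2
            - ∑ i ∈ Finset.Icc 1 ℓ, (cnt i : ℝ) * Real.log ((2 : ℝ) ^ (𝔞 i).card / (r i : ℝ)) := by
        rw [hsplit2]
        have h5 : ((N : ℝ) - (σ₀ : ℝ)) * Real.log 2
            = (N : ℝ) * Real.log 2 - (σ₀ : ℝ) * Real.log 2 := sub_mul _ _ _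
        linarith [hlogE]
      linarith [hsumLlow]
    rw [div_le_iff₀ hNR]
    calc Real.log ((egyptianFractions N).card)
        ≤ (N : ℝ) * Real.log 2 - (β * (N : ℝ) * SIG - K * SL) := hfinalN
      _ = ((Real.log 2 - β * SIG) + K * SL / N) * N := by
          field_simp
          ring
  -- ================= limsup conclusion =================
  have hgt : Filter.Tendsto (fun N : ℕ => (Real.log 2 - β * SIG) + K * SL / N)
      Filter.atTop (nhds (Real.log 2 - β * SIG)) := by
    have h0 : Filter.Tendsto (fun N : ℕ => K * SL / N) Filter.atTop (nhds 0) := by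
      have h1 := tendsto_one_div_atTop_nhds_zero_nat.const_mul (K * SL)
      simp only [mul_zero] at h1
      refine h1.congr fun N => ?_
      rw [mul_one_div]
    have h2 := (tendsto_const_nhds
      (x := Real.log 2 - β * SIG) (f := Filter.atTop (α := ℕ))).add h0
    simpa using h2
  have hf0 : ∀ N : ℕ, 0 ≤ Real.log (egyptianFractions N).card / N := by
    intro N
    apply div_nonneg _ (Nat.cast_nonneg N)
    apply Real.log_nonneg
    have : 1 ≤ (egyptianFractions N).card := ChainsUB.one_le_egy_card (Finset.Icc 1 N)
    exact_mod_cast this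
  have hcob : Filter.IsCoboundedUnder (· ≤ ·) Filter.atTop
      (fun N : ℕ => Real.log (egyptianFractions N).card / N) := by
    apply Filter.IsBoundedUnder.isCoboundedUnder_le (α := ℝ)
    exact Filter.isBoundedUnder_of ⟨0, fun N => hf0 N⟩
  have hbdd : Filter.IsBoundedUnder (· ≤ ·) Filter.atTop
      (fun N : ℕ => (Real.log 2 - β * SIG) + K * SL / N) := hgt.isBoundedUnder_le
  have hev : ∀ᶠ N in Filter.atTop, Real.log (egyptianFractions N).card / N
      ≤ (Real.log 2 - β * SIG) + K * SL / N :=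
    Filter.eventually_atTop.2 ⟨1, hbound⟩
  have hlim : Filter.atTop.limsup (fun N : ℕ => Real.log (egyptianFractions N).card / N)
      ≤ Real.log 2 - β * SIG := by
    calc Filter.atTop.limsup (fun N : ℕ => Real.log (egyptianFractions N).card / N)
        ≤ Filter.atTop.limsup (fun N : ℕ => (Real.log 2 - β * SIG) + K * SL / N) :=
          Filter.limsup_le_limsup hev hcob hbdd
      _ = Real.log 2 - β * SIG := hgt.limsup_eq
  have hfin : Real.log 2 - β * SIG ≤ (Real.log 2 - δ * SIG) + ε' := by
    rw [hβd]
    have h1 : ε * SIG ≤ (ε' / (SIG + 1)) * SIG :=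
      mul_le_mul_of_nonneg_right hεle hSIG0
    have h2 : (ε' / (SIG + 1)) * SIG ≤ ε' := by
      rw [div_mul_eq_mul_div, div_le_iff₀ (by linarith : (0:ℝ) < SIG + 1)]
      nlinarith
    nlinarith
  exact le_trans hlim hfin
end

section
/- Let 𝒰 := { N ≥ 1 : for all w_1,…,w_{N−1} ∈ {−1,0,+1}, ∑_{n=1}^{N−1} w_n/n ≠ 1/N }. If N ∈ 𝒰 then #𝔈_N = 2·#𝔈_{N−1}. Consequently, #𝔈_N ≥ 2^{#𝒰(N)} for every N ≥ 1, where 𝒰(N) := 𝒰 ∩ [1,N]. -/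
open Finset

/-- `𝒰` is the set of positive integers `N` such that no signed subsum
`∑_{n=1}^{N-1} w_n/n` with `w_n ∈ {-1,0,1}` equals `1/N`. -/
def goodSet : Set ℕ :=
  {N : ℕ | 1 ≤ N ∧ ∀ w : ℕ → ℚ,
    (∀ n ∈ Finset.Icc 1 (N - 1), w n ∈ ({-1, 0, 1} : Set ℚ)) →
    ∑ n ∈ Finset.Icc 1 (N - 1), w n / (n : ℚ) ≠ 1 / (N : ℚ)}

lemma egy_mono : Monotone egyptianFractions := by
  intro a b hab
  exact Finset.image_subset_image
    (Finset.powerset_mono.mpr (Finset.Icc_subset_Icc_right hab))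

lemma egy_succ (N : ℕ) :
    egyptianFractions (N+1) =
      egyptianFractions N ∪ (egyptianFractions N).image (fun x => x + 1/((N:ℚ)+1)) := by
  ext x
  simp only [egyptianFractions, Finset.mem_union, Finset.mem_image, Finset.mem_powerset]
  constructor
  · rintro ⟨s, hs, rfl⟩
    by_cases hN : N+1 ∈ s
    · right
      refine ⟨∑ n ∈ s.erase (N+1), (1:ℚ)/n, ⟨s.erase (N+1), ?_, rfl⟩, ?_⟩
      · intro n hn
        have h1 := hs (Finset.mem_of_mem_erase hn)
        have h2 := Finset.ne_of_mem_erase hn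
        simp only [Finset.mem_Icc] at h1 ⊢
        omega
      · have := Finset.sum_erase_add s (fun n : ℕ => (1:ℚ)/n) hN
        rw [← this]
        push_cast
        ring
    · left
      refine ⟨s, ?_, rfl⟩
      intro n hn
      have h1 := hs hn
      simp only [Finset.mem_Icc] at h1 ⊢
      have : n ≠ N+1 := fun h => hN (h ▸ hn)
      omega
  · rintro (⟨s, hs, rfl⟩ | ⟨y, ⟨t, ht, rfl⟩, rfl⟩)
    · exact ⟨s, hs.trans (Finset.Icc_subset_Icc_right (Nat.le_succ N)), rfl⟩
    · have hNt : N+1 ∉ t := by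
        intro h
        have := ht h
        simp only [Finset.mem_Icc] at this
        omega
      refine ⟨insert (N+1) t, ?_, ?_⟩
      · intro n hn
        rcases Finset.mem_insert.mp hn with h | h
        · simp [h]
        · exact Finset.Icc_subset_Icc_right (Nat.le_succ N) (ht h)
      · rw [Finset.sum_insert hNt]
        push_cast
        ring

lemma egy_disj (N : ℕ) (hN : N+1 ∈ goodSet) :
    Disjoint (egyptianFractions N) ((egyptianFractions N).image (fun x => x + 1/((N:ℚ)+1))) := by
  rw [Finset.disjoint_left]
  rintro x hx hx'
  simp only [egyptianFractions, Finset.mem_image, Finset.mem_powerset] at hx hx'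
  obtain ⟨s, hs, rfl⟩ := hx
  obtain ⟨y, ⟨t, ht, rfl⟩, heq⟩ := hx'
  obtain ⟨-, hgood⟩ := hN
  apply hgood (fun n => (if n ∈ s then (1:ℚ) else 0) - (if n ∈ t then 1 else 0)) ?_ ?_
  · intro n _
    by_cases h1 : n ∈ s <;> by_cases h2 : n ∈ t <;> simp [h1, h2]
  · have hred : (N+1 : ℕ) - 1 = N := rfl
    rw [hred]
    have hsum : ∀ u : Finset ℕ, u ⊆ Finset.Icc 1 N →
        ∑ n ∈ Finset.Icc 1 N, (if n ∈ u then (1:ℚ) else 0)/n = ∑ n ∈ u, (1:ℚ)/n := by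
      intro u hu
      rw [← Finset.sum_subset hu (fun n _ hn => by simp [hn])]
      exact Finset.sum_congr rfl (fun n hn => by simp [hn])
    have : ∑ n ∈ Finset.Icc 1 N,
        ((if n ∈ s then (1:ℚ) else 0) - (if n ∈ t then 1 else 0)) / n
        = (∑ n ∈ s, (1:ℚ)/n) - ∑ n ∈ t, (1:ℚ)/n := by
      rw [← hsum s hs, ← hsum t ht, ← Finset.sum_sub_distrib]
      exact Finset.sum_congr rfl (fun n _ => by rw [sub_div])
    rw [this, ← heq]
    push_cast
    ring

lemma egy_double (N : ℕ) (hN : N ∈ goodSet) :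
    (egyptianFractions N).card = 2 * (egyptianFractions (N - 1)).card := by
  obtain ⟨M, rfl⟩ : ∃ M, N = M + 1 := ⟨N - 1, by have := hN.1; omega⟩
  have hred : (M+1 : ℕ) - 1 = M := rfl
  rw [hred, egy_succ M, Finset.card_union_of_disjoint (egy_disj M hN),
    Finset.card_image_of_injective _ (add_left_injective (1/((M:ℚ)+1)))]
  ring

theorem doubling_and_lower_bound :
    (∀ N : ℕ, N ∈ goodSet →
      (egyptianFractions N).card = 2 * (egyptianFractions (N - 1)).card) ∧
    (∀ N : ℕ, 1 ≤ N →
      2 ^ (goodSet ∩ Set.Icc 1 N).ncard ≤ (egyptianFractions N).card) := by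
  refine ⟨fun N hN => egy_double N hN, ?_⟩
  have key : ∀ N : ℕ, 2 ^ (goodSet ∩ Set.Icc 1 N).ncard ≤ (egyptianFractions N).card := by
    intro N
    induction N with
    | zero =>
        have h1 : (goodSet ∩ Set.Icc 1 0) = ∅ := by
          ext x; simp [Set.mem_Icc]
        rw [h1]
        simp [egyptianFractions]
    | succ M ih =>
        by_cases hg : M+1 ∈ goodSet
        · have hins : goodSet ∩ Set.Icc 1 (M+1) = insert (M+1) (goodSet ∩ Set.Icc 1 M) := by
            ext x
            simp only [Set.mem_inter_iff, Set.mem_Icc, Set.mem_insert_iff]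
            constructor
            · rintro ⟨hx, h1, h2⟩
              rcases Nat.lt_or_ge x (M+1) with h | h
              · right; exact ⟨hx, h1, by omega⟩
              · left; omega
            · rintro (rfl | ⟨hx, h1, h2⟩)
              · exact ⟨hg, by omega, le_refl _⟩
              · exact ⟨hx, h1, by omega⟩
          have hfin : (goodSet ∩ Set.Icc 1 M).Finite :=
            (Set.finite_Icc 1 M).inter_of_right _
          have hnm : (M+1) ∉ (goodSet ∩ Set.Icc 1 M) := by
            rintro ⟨-, -, h⟩; omega
          rw [hins, Set.ncard_insert_of_notMem hnm hfin, pow_succ,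
            egy_double (M+1) hg]
          have hred : (M+1 : ℕ) - 1 = M := rfl
          rw [hred, mul_comm 2]
          exact Nat.mul_le_mul_right 2 ih
        · have heq : goodSet ∩ Set.Icc 1 (M+1) = goodSet ∩ Set.Icc 1 M := by
            ext x
            simp only [Set.mem_inter_iff, Set.mem_Icc]
            constructor
            · rintro ⟨hx, h1, h2⟩
              refine ⟨hx, h1, ?_⟩
              rcases Nat.lt_or_ge x (M+1) with h | h
              · omega
              · exfalso; apply hg; have : x = M+1 := by omega
                exact this ▸ hx
            · rintro ⟨hx, h1, h2⟩; exact ⟨hx, h1, by omega⟩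
          rw [heq]
          exact ih.trans (Finset.card_le_card (egy_mono (Nat.le_succ M)))
  exact fun N _ => key N
end

section
/- The set 𝒰 contains 1 and all prime numbers; that is, for every prime p, there are no w_1,…,w_{p−1} ∈ {−1,0,+1} with ∑_{n=1}^{p−1} w_n/n = 1/p. -/
open Finset

theorem one_and_primes_in_goodSet :
    1 ∈ goodSet ∧ ∀ p : ℕ, p.Prime → p ∈ goodSet := by
  constructor
  · refine ⟨le_refl 1, ?_⟩
    intro w _
    simp
  · intro p hp
    have hp2 : 2 ≤ p := hp.two_le
    refine ⟨by omega, ?_⟩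
    intro w hw hsum
    set L := (p - 1).factorial with hLdef
    -- integer versions of the weights
    set z : ℕ → ℤ := fun n => if w n = -1 then -1 else if w n = 1 then 1 else 0 with hzdef
    have hzeq : ∀ n ∈ Finset.Icc 1 (p - 1), ((z n : ℤ) : ℚ) = w n := by
      intro n hn
      rcases hw n hn with h | h | h
      · norm_num [hzdef, h]
      · norm_num [hzdef, h]
      · simp only [Set.mem_singleton_iff] at h
        norm_num [hzdef, h]
    have hLpos : 0 < L := Nat.factorial_pos _
    have key : (L : ℚ) * ∑ n ∈ Finset.Icc 1 (p - 1), w n / (n : ℚ)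
        = ((∑ n ∈ Finset.Icc 1 (p - 1), z n * (L / n : ℕ) : ℤ) : ℚ) := by
      rw [Finset.mul_sum, Int.cast_sum]
      refine Finset.sum_congr rfl ?_
      intro n hn
      obtain ⟨hn1, hn2⟩ := Finset.mem_Icc.mp hn
      have hdvd : n ∣ L := Nat.dvd_factorial hn1 hn2
      have hn0 : (n : ℚ) ≠ 0 := by positivity
      have hcast : ((L / n : ℕ) : ℚ) = (L : ℚ) / n := by
        rw [Nat.cast_div hdvd hn0]
      rw [Int.cast_mul, Int.cast_natCast, hcast, hzeq n hn]
      field_simp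
    rw [hsum] at key
    set k : ℤ := ∑ n ∈ Finset.Icc 1 (p - 1), z n * (L / n : ℕ) with hkdef
    have hpne : (p : ℚ) ≠ 0 := by positivity
    have : (L : ℚ) = (p : ℚ) * k := by
      field_simp at key
      linarith [key]
    have hint : (L : ℤ) = (p : ℤ) * k := by exact_mod_cast this
    have hdvd : (p : ℤ) ∣ (L : ℤ) := ⟨k, hint⟩
    have hdvdn : p ∣ L := Int.natCast_dvd_natCast.mp hdvd
    have := (Nat.Prime.dvd_factorial hp).mp hdvdn
    omega
end
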